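/- arXiv:1401.4734 — 13 statements merged into one kernel-verified Lean document; each statement's English description precedes it below -/
import Mathlib

section
/- Let G be an α-regular finite simple graph on a nonempty vertex set and let k be an integer with 2 ≤ k ≤ α. Then M_G(k) = k·α − k(k−1)/2 if and only if G contains a clique on k vertices. -/
open SimpleGraph

/-- The number of edges of `G` incident to at least one vertex of `S`. -/
noncomputable def incidentEdgeCount {V : Type*} (G : SimpleGraph V) (S : Finset V) : ℕ :=
  {e ∈ G.edgeSet | ∃ v ∈ S, v ∈ e}.ncard

/-- `fileSize G k` is the minimum, over all `k`-element vertex sets `S`, of the number of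
edges of `G` incident to at least one vertex of `S`. -/
noncomputable def fileSize {V : Type*} (G : SimpleGraph V) (k : ℕ) : ℕ :=
  sInf { m | ∃ S : Finset V, S.card = k ∧ m = incidentEdgeCount G S }

section Aux

open Classical
set_option linter.unusedSectionVars false

variable {V : Type*} [Fintype V] [DecidableEq V] (G : SimpleGraph V) [DecidableRel G.Adj]

/-- Edges with at least one endpoint in `S`. -/
noncomputable def incFinset (S : Finset V) : Finset (Sym2 V) :=
  G.edgeFinset.filter (fun e => ∃ v ∈ S, v ∈ e)

/-- Edges with both endpoints in `S`. -/
noncomputable def insFinset (S : Finset V) : Finset (Sym2 V) :=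
  G.edgeFinset.filter (fun e => ∀ v ∈ e, v ∈ S)

lemma incidentEdgeCount_eq (S : Finset V) :
    incidentEdgeCount G S = (incFinset G S).card := by
  rw [incidentEdgeCount, ← Set.ncard_coe_finset]
  congr 1
  ext e
  simp [incFinset, SimpleGraph.mem_edgeFinset]

lemma pointwise_card (S : Finset V) (e : Sym2 V) (he : e ∈ G.edgeFinset) :
    (S.filter (fun v => v ∈ e)).card =
      (if ∃ v ∈ S, v ∈ e then 1 else 0) + (if ∀ v ∈ e, v ∈ S then 1 else 0) := by
  induction e using Sym2.inductionOn with
  | hf a b =>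
    have hab : a ≠ b := by
      rw [SimpleGraph.mem_edgeFinset] at he
      exact (G.ne_of_adj he)
    have hfe : S.filter (fun v => v ∈ s(a, b)) = S ∩ {a, b} := by
      ext v
      simp [Sym2.mem_iff, Finset.mem_inter, and_comm]
    have hP : (∃ v ∈ S, v ∈ s(a, b)) ↔ (a ∈ S ∨ b ∈ S) := by
      constructor
      · rintro ⟨v, hv, hve⟩
        rcases Sym2.mem_iff.mp hve with rfl | rfl
        · exact Or.inl hv
        · exact Or.inr hv
      · rintro (h | h)
        · exact ⟨a, h, by simp⟩
        · exact ⟨b, h, by simp⟩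
    have hQ : (∀ v ∈ s(a, b), v ∈ S) ↔ (a ∈ S ∧ b ∈ S) := by
      constructor
      · intro h; exact ⟨h a (by simp), h b (by simp)⟩
      · rintro ⟨ha, hb⟩ v hv
        rcases Sym2.mem_iff.mp hv with rfl | rfl <;> assumption
    rw [hfe]
    by_cases ha : a ∈ S <;> by_cases hb : b ∈ S
    · have h1 : S ∩ {a, b} = {a, b} := by
        apply Finset.inter_eq_right.mpr
        intro v hv
        rcases Finset.mem_insert.mp hv with rfl | hv
        · exact ha
        · rw [Finset.mem_singleton] at hv; subst hv; exact hb
      rw [h1, if_pos (hP.mpr (Or.inl ha)), if_pos (hQ.mpr ⟨ha, hb⟩),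
        Finset.card_pair hab]
    · have h1 : S ∩ {a, b} = {a} := by
        ext v
        simp only [Finset.mem_inter, Finset.mem_insert, Finset.mem_singleton]
        constructor
        · rintro ⟨hvS, rfl | rfl⟩
          · rfl
          · exact absurd hvS hb
        · rintro rfl; exact ⟨ha, Or.inl rfl⟩
      rw [h1, if_pos (hP.mpr (Or.inl ha)), if_neg (fun h => hb (hQ.mp h).2),
        Finset.card_singleton]
    · have h1 : S ∩ {a, b} = {b} := by
        ext v
        simp only [Finset.mem_inter, Finset.mem_insert, Finset.mem_singleton]
        constructor
        · rintro ⟨hvS, rfl | rfl⟩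
          · exact absurd hvS ha
          · rfl
        · rintro rfl; exact ⟨hb, Or.inr rfl⟩
      rw [h1, if_pos (hP.mpr (Or.inr hb)), if_neg (fun h => ha (hQ.mp h).1),
        Finset.card_singleton]
    · have h1 : S ∩ {a, b} = ∅ := by
        ext v
        simp only [Finset.mem_inter, Finset.mem_insert, Finset.mem_singleton,
          Finset.notMem_empty, iff_false, not_and]
        rintro hvS (rfl | rfl)
        · exact ha hvS
        · exact hb hvS
      rw [h1, if_neg (fun h => by rcases hP.mp h with h' | h' <;> [exact ha h'; exact hb h']),
        if_neg (fun h => ha (hQ.mp h).1), Finset.card_empty]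

lemma sum_degrees_eq (S : Finset V) :
    ∑ v ∈ S, G.degree v = (incFinset G S).card + (insFinset G S).card := by
  have h1 : ∀ v, G.degree v = (G.edgeFinset.filter (fun e => v ∈ e)).card := by
    intro v
    rw [← SimpleGraph.card_incidenceFinset_eq_degree, SimpleGraph.incidenceFinset_eq_filter]
  calc ∑ v ∈ S, G.degree v
      = ∑ v ∈ S, ∑ e ∈ G.edgeFinset, (if v ∈ e then 1 else 0) := by
        simp_rw [h1, Finset.card_filter]
    _ = ∑ e ∈ G.edgeFinset, ∑ v ∈ S, (if v ∈ e then 1 else 0) := Finset.sum_comm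
    _ = ∑ e ∈ G.edgeFinset, (S.filter (fun v => v ∈ e)).card := by
        simp_rw [Finset.card_filter]
    _ = ∑ e ∈ G.edgeFinset,
          ((if ∃ v ∈ S, v ∈ e then 1 else 0) + (if ∀ v ∈ e, v ∈ S then 1 else 0)) :=
        Finset.sum_congr rfl (fun e he => pointwise_card G S e he)
    _ = (incFinset G S).card + (insFinset G S).card := by
        rw [Finset.sum_add_distrib, incFinset, insFinset, Finset.card_filter,
          Finset.card_filter]

/-- The set of non-diagonal elements of `S.sym2`. -/
noncomputable def offDiagSym2 (S : Finset V) : Finset (Sym2 V) :=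
  S.sym2.filter (fun e => ¬ e.IsDiag)

lemma ins_subset_offDiag (S : Finset V) : insFinset G S ⊆ offDiagSym2 S := by
  intro e he
  rw [insFinset, Finset.mem_filter] at he
  rw [offDiagSym2, Finset.mem_filter]
  refine ⟨Finset.mem_sym2_iff.mpr he.2, ?_⟩
  exact G.not_isDiag_of_mem_edgeSet (SimpleGraph.mem_edgeFinset.mp he.1)

lemma offDiagSym2_card (S : Finset V) : (offDiagSym2 S).card = S.card.choose 2 := by
  have hdiag : S.sym2.filter (fun e => e.IsDiag) = S.image (fun a => s(a, a)) := by
    ext e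
    induction e using Sym2.inductionOn with
    | hf a b =>
      simp only [Finset.mem_filter, Finset.mk_mem_sym2_iff, Sym2.mk_isDiag_iff,
        Finset.mem_image]
      constructor
      · rintro ⟨⟨ha, _⟩, rfl⟩
        exact ⟨a, ha, rfl⟩
      · rintro ⟨x, hx, hxe⟩
        rw [Sym2.eq_iff] at hxe
        rcases hxe with ⟨rfl, rfl⟩ | ⟨rfl, rfl⟩ <;> exact ⟨⟨hx, hx⟩, rfl⟩
  have hinj : (S.image (fun a => s(a, a))).card = S.card := by
    apply Finset.card_image_of_injective
    intro x y hxy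
    rw [Sym2.eq_iff] at hxy
    rcases hxy with ⟨rfl, _⟩ | ⟨rfl, _⟩ <;> rfl
  have hsplit := Finset.card_filter_add_card_filter_not
    (s := S.sym2) (p := fun e => e.IsDiag)
  rw [hdiag, hinj, Finset.card_sym2] at hsplit
  have : (S.card + 1).choose 2 = S.card + S.card.choose 2 := by
    rw [Nat.choose_succ_succ, Nat.choose_one_right]
  rw [offDiagSym2]
  omega

lemma ins_card_le (S : Finset V) : (insFinset G S).card ≤ S.card.choose 2 := by
  rw [← offDiagSym2_card S]
  exact Finset.card_le_card (ins_subset_offDiag G S)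

lemma clique_iff_ins_card (S : Finset V) :
    G.IsClique S ↔ (insFinset G S).card = S.card.choose 2 := by
  constructor
  · intro hcl
    have hsub : offDiagSym2 S ⊆ insFinset G S := by
      intro e he
      rw [offDiagSym2, Finset.mem_filter] at he
      induction e using Sym2.inductionOn with
      | hf a b =>
        obtain ⟨hmem, hnd⟩ := he
        rw [Finset.mk_mem_sym2_iff] at hmem
        rw [Sym2.mk_isDiag_iff] at hnd
        have hadj : G.Adj a b := hcl hmem.1 hmem.2 hnd
        rw [insFinset, Finset.mem_filter]
        refine ⟨SimpleGraph.mem_edgeFinset.mpr hadj, ?_⟩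
        intro v hv
        rcases Sym2.mem_iff.mp hv with rfl | rfl
        · exact hmem.1
        · exact hmem.2
    have : insFinset G S = offDiagSym2 S :=
      Finset.Subset.antisymm (ins_subset_offDiag G S) hsub
    rw [this, offDiagSym2_card]
  · intro hcard
    have heq : insFinset G S = offDiagSym2 S := by
      apply Finset.eq_of_subset_of_card_le (ins_subset_offDiag G S)
      rw [hcard, offDiagSym2_card]
    intro a ha b hb hab
    have : s(a, b) ∈ offDiagSym2 S := by
      rw [offDiagSym2, Finset.mem_filter, Finset.mk_mem_sym2_iff, Sym2.mk_isDiag_iff]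
      exact ⟨⟨ha, hb⟩, hab⟩
    rw [← heq, insFinset, Finset.mem_filter, SimpleGraph.mem_edgeFinset] at this
    exact this.1

lemma inc_card_eq {α : ℕ} (hreg : G.IsRegularOfDegree α) (S : Finset V) :
    (incFinset G S).card = S.card * α - (insFinset G S).card := by
  have h := sum_degrees_eq G S
  have hsum : ∑ v ∈ S, G.degree v = S.card * α := by
    rw [Finset.sum_congr rfl (fun v _ => hreg v), Finset.sum_const, smul_eq_mul]
  omega

end Aux

theorem stmt1 {V : Type*} [Fintype V] [DecidableEq V] [Nonempty V]
    (G : SimpleGraph V) [DecidableRel G.Adj]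
    (α k : ℕ) (hreg : G.IsRegularOfDegree α) (hk2 : 2 ≤ k) (hk : k ≤ α) :
    fileSize G k = k * α - Nat.choose k 2 ↔ ∃ s : Finset V, G.IsNClique k s := by
  classical
  set T : Set ℕ := { m | ∃ S : Finset V, S.card = k ∧ m = incidentEdgeCount G S } with hT
  obtain ⟨v⟩ := ‹Nonempty V›
  have hαV : α < Fintype.card V := by
    have := G.degree_lt_card_verts v
    rwa [hreg v] at this
  have hkV : k ≤ Fintype.card V := le_of_lt (lt_of_le_of_lt hk hαV)
  have hTne : T.Nonempty := by
    obtain ⟨S, -, hS⟩ := Finset.exists_subset_card_eq (s := (Finset.univ : Finset V))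
      (by simpa using hkV)
    exact ⟨incidentEdgeCount G S, S, hS, rfl⟩
  have hCle : k.choose 2 ≤ k * α := by
    calc k.choose 2 = k * (k - 1) / 2 := Nat.choose_two_right k
      _ ≤ k * (k - 1) := Nat.div_le_self _ _
      _ ≤ k * α := Nat.mul_le_mul_left k (by omega)
  have hlb : ∀ m ∈ T, k * α - k.choose 2 ≤ m := by
    rintro m ⟨S, hSk, rfl⟩
    rw [incidentEdgeCount_eq, inc_card_eq G hreg, hSk]
    have hle := ins_card_le G S
    rw [hSk] at hle
    omega
  constructor
  · intro h
    have hmem := Nat.sInf_mem hTne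
    obtain ⟨S, hSk, hSm⟩ := hmem
    rw [fileSize] at h
    rw [← hT] at h
    rw [h] at hSm
    rw [incidentEdgeCount_eq, inc_card_eq G hreg, hSk] at hSm
    have hle := ins_card_le G S
    rw [hSk] at hle
    have hins : (insFinset G S).card = k.choose 2 := by omega
    refine ⟨S, ?_, hSk⟩
    rw [clique_iff_ins_card, hSk]
    exact hins
  · rintro ⟨s, hcl, hsk⟩
    have hins : (insFinset G s).card = k.choose 2 := by
      have := (clique_iff_ins_card G s).mp hcl
      rwa [hsk] at this
    have hval : incidentEdgeCount G s = k * α - k.choose 2 := by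
      rw [incidentEdgeCount_eq, inc_card_eq G hreg, hsk, hins]
    have hub : sInf T ≤ k * α - k.choose 2 := by
      apply Nat.sInf_le
      exact ⟨s, hsk, hval.symm⟩
    have hlb' : k * α - k.choose 2 ≤ sInf T := hlb _ (Nat.sInf_mem hTne)
    rw [fileSize, ← hT]
    omega
end

section
/- Let n and r be integers with 2 ≤ r ≤ n and r dividing n, let T be the (n,r)-Turán graph, and set α = (r−1)·n/r. Let k be an integer with 1 ≤ k ≤ α, and write k = b·r + t with b, t nonnegative integers and t ≤ r − 1. Then M_T(k) = k·α − k(k−1)/2 + r·b(b−1)/2 + b·t. -/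
open SimpleGraph

section Aux
open Finset
def cnt (n r : ℕ) (S : Finset (Fin n)) (i : ℕ) : ℕ :=
  (S.filter (fun v : Fin n => (v : ℕ) % r = i)).card

variable {n r : ℕ}

lemma sum_cnt (hr : 0 < r) (S : Finset (Fin n)) :
    ∑ i ∈ Finset.range r, cnt n r S i = S.card :=
  (Finset.card_eq_sum_card_fiberwise
    (fun v _ => Finset.mem_range.2 (Nat.mod_lt _ hr))).symm

lemma sum_cnt_sq (hr : 0 < r) (S : Finset (Fin n)) :
    ∑ v ∈ S, cnt n r S ((v : ℕ) % r)
      = ∑ i ∈ Finset.range r, cnt n r S i * cnt n r S i := by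
  rw [← Finset.sum_fiberwise_of_maps_to
    (fun v (_ : v ∈ S) => Finset.mem_range.2 (Nat.mod_lt _ hr))
    (fun v : Fin n => cnt n r S ((v : ℕ) % r))]
  refine Finset.sum_congr rfl fun i hi => ?_
  have h : ∀ v ∈ S.filter (fun v : Fin n => (v : ℕ) % r = i),
      cnt n r S ((v : ℕ) % r) = cnt n r S i := fun v hv => by
    rw [(Finset.mem_filter.1 hv).2]
  rw [Finset.sum_congr rfl h, Finset.sum_const, smul_eq_mul]
  rfl

lemma inter_card (S : Finset (Fin n)) (v : Fin n) :
    ((turanGraph n r).neighborFinset v ∩ S).card + cnt n r S ((v : ℕ) % r) = S.card := by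
  have h1 : (turanGraph n r).neighborFinset v ∩ S
      = S.filter (fun u : Fin n => ¬ ((u : ℕ) % r = (v : ℕ) % r)) := by
    ext u
    simp only [Finset.mem_inter, mem_neighborFinset, Finset.mem_filter, turanGraph_adj]
    constructor
    · rintro ⟨h, h2⟩; exact ⟨h2, fun e => h e.symm⟩
    · rintro ⟨h2, h⟩; exact ⟨fun e => h e.symm, h2⟩
  rw [h1, cnt, add_comm]
  exact Finset.card_filter_add_card_filter_not _

/-- subgraph of edges incident to S -/
def bG (n r : ℕ) (S : Finset (Fin n)) : SimpleGraph (Fin n) where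
  Adj u v := (turanGraph n r).Adj u v ∧ (u ∈ S ∨ v ∈ S)
  symm := ⟨fun u v h => ⟨h.1.symm, h.2.symm⟩⟩
  loopless := ⟨fun v h => (turanGraph n r).irrefl h.1⟩

/-- subgraph of edges inside S -/
def iG (n r : ℕ) (S : Finset (Fin n)) : SimpleGraph (Fin n) where
  Adj u v := (turanGraph n r).Adj u v ∧ (u ∈ S ∧ v ∈ S)
  symm := ⟨fun u v h => ⟨h.1.symm, h.2.2, h.2.1⟩⟩
  loopless := ⟨fun v h => (turanGraph n r).irrefl h.1⟩

instance (S : Finset (Fin n)) : DecidableRel (bG n r S).Adj :=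
  fun u v => inferInstanceAs (Decidable (_ ∧ _))

instance (S : Finset (Fin n)) : DecidableRel (iG n r S).Adj :=
  fun u v => inferInstanceAs (Decidable (_ ∧ _))

lemma inc_eq_card (S : Finset (Fin n)) :
    incidentEdgeCount (turanGraph n r) S = (bG n r S).edgeFinset.card := by
  rw [incidentEdgeCount]
  have h : {e ∈ (turanGraph n r).edgeSet | ∃ v ∈ S, v ∈ e} = (bG n r S).edgeSet := by
    ext e
    induction e with
    | _ u v =>
      simp only [Set.mem_setOf_eq, mem_edgeSet, Sym2.mem_iff, bG]
      constructor
      · rintro ⟨ha, w, hw, rfl | rfl⟩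
        · exact ⟨ha, Or.inl hw⟩
        · exact ⟨ha, Or.inr hw⟩
      · rintro ⟨ha, hw | hw⟩
        · exact ⟨ha, u, hw, Or.inl rfl⟩
        · exact ⟨ha, v, hw, Or.inr rfl⟩
  rw [h, edgeFinset, Set.ncard_eq_toFinset_card']

lemma deg_sum_aux (S : Finset (Fin n)) (v : Fin n) :
    (bG n r S).degree v + (iG n r S).degree v =
      (if v ∈ S then (turanGraph n r).degree v else 0)
        + ((turanGraph n r).neighborFinset v ∩ S).card := by
  by_cases hv : v ∈ S
  · have h1 : (bG n r S).neighborFinset v = (turanGraph n r).neighborFinset v := by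
      ext u; rw [mem_neighborFinset]; simp [bG, mem_neighborFinset, hv]
    have h2 : (iG n r S).neighborFinset v = (turanGraph n r).neighborFinset v ∩ S := by
      ext u; rw [mem_neighborFinset]; simp [iG, mem_neighborFinset, hv, Finset.mem_inter, and_comm]
    simp only [← card_neighborFinset_eq_degree, h1, h2]
    simp [hv]
  · have h1 : (bG n r S).neighborFinset v = (turanGraph n r).neighborFinset v ∩ S := by
      ext u; rw [mem_neighborFinset]; simp [bG, mem_neighborFinset, hv, Finset.mem_inter]
    have h2 : (iG n r S).neighborFinset v = ∅ := by
      ext u; rw [mem_neighborFinset]; simp [iG, mem_neighborFinset, hv]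
    simp only [← card_neighborFinset_eq_degree, h1, h2]
    simp [hv]

lemma sum_inter_card (S : Finset (Fin n)) :
    ∑ v : Fin n, ((turanGraph n r).neighborFinset v ∩ S).card
      = ∑ u ∈ S, (turanGraph n r).degree u := by
  have h1 : ∀ v : Fin n, ((turanGraph n r).neighborFinset v ∩ S).card
      = ∑ u ∈ S, if (turanGraph n r).Adj v u then 1 else 0 := by
    intro v
    rw [Finset.inter_comm, ← Finset.filter_mem_eq_inter, Finset.card_filter]
    simp [mem_neighborFinset]
  calc ∑ v : Fin n, ((turanGraph n r).neighborFinset v ∩ S).card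
      = ∑ v : Fin n, ∑ u ∈ S, if (turanGraph n r).Adj v u then 1 else 0 := by
        simp only [h1]
    _ = ∑ u ∈ S, ∑ v : Fin n, if (turanGraph n r).Adj v u then 1 else 0 := Finset.sum_comm
    _ = ∑ u ∈ S, (turanGraph n r).degree u := by
        refine Finset.sum_congr rfl fun u hu => ?_
        rw [degree, neighborFinset_eq_filter, Finset.card_filter]
        refine Finset.sum_congr rfl fun v _ => by simp [adj_comm]

lemma master1 (S : Finset (Fin n)) :
    incidentEdgeCount (turanGraph n r) S + (iG n r S).edgeFinset.card
      = ∑ u ∈ S, (turanGraph n r).degree u := by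
  have h2 := (bG n r S).sum_degrees_eq_twice_card_edges
  have h3 := (iG n r S).sum_degrees_eq_twice_card_edges
  have h4 : ∑ v : Fin n, ((bG n r S).degree v + (iG n r S).degree v)
      = ∑ v : Fin n, ((if v ∈ S then (turanGraph n r).degree v else 0)
        + ((turanGraph n r).neighborFinset v ∩ S).card) :=
    Finset.sum_congr rfl fun v _ => deg_sum_aux S v
  rw [Finset.sum_add_distrib, Finset.sum_add_distrib, h2, h3, sum_inter_card,
    Finset.sum_ite_mem, Finset.univ_inter] at h4
  rw [inc_eq_card]
  omega

lemma two_mul_choose_two (k : ℕ) : 2 * Nat.choose k 2 = k * (k - 1) := by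
  rcases k with _ | m
  · simp
  · rw [Nat.choose_two_right, Nat.succ_sub_one]
    have h : 2 ∣ (m + 1) * m := by
      rw [mul_comm]; exact (Nat.even_mul_succ_self m).two_dvd
    exact Nat.mul_div_cancel' h

lemma filter_mod_eq (r t i b : ℕ) (htr : t < r) (hi : i < r) :
    (Finset.range (b * r + t)).filter (fun j => j % r = i)
      = (Finset.range (b + if i < t then 1 else 0)).image (fun q => q * r + i) := by
  have hr : 0 < r := lt_of_le_of_lt (Nat.zero_le _) htr
  ext j
  simp only [mem_filter, mem_range, mem_image]
  constructor
  · rintro ⟨hj, hmod⟩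
    refine ⟨j / r, ?_, ?_⟩
    · by_cases hit : i < t
      · rw [if_pos hit]
        have h1 : j < (b + 1) * r := by
          have : b * r + t ≤ b * r + r := by omega
          calc j < b * r + t := hj
            _ ≤ b * r + r := this
            _ = (b + 1) * r := by ring
        exact (Nat.div_lt_iff_lt_mul hr).2 h1
      · rw [if_neg hit, add_zero]
        by_contra hq
        push_neg at hq
        have h2 : r * b ≤ r * (j / r) := Nat.mul_le_mul_left r hq
        have h3 := Nat.div_add_mod j r
        have h4 : r * b = b * r := mul_comm r b
        have h5 : t ≤ i := le_of_not_gt hit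
        linarith
    · have h := Nat.div_add_mod j r
      rw [hmod] at h
      calc j / r * r + i = r * (j / r) + i := by rw [Nat.mul_comm]
        _ = j := h
  · rintro ⟨q, hq, rfl⟩
    have hmod : (q * r + i) % r = i := by
      rw [add_comm, Nat.add_mul_mod_self_right]; exact Nat.mod_eq_of_lt hi
    refine ⟨?_, hmod⟩
    by_cases hit : i < t
    · rw [if_pos hit] at hq
      have h1 : q * r ≤ b * r := mul_le_mul_left (by omega) r
      linarith
    · rw [if_neg hit, add_zero] at hq
      have h1 : (q + 1) * r ≤ b * r := mul_le_mul_left hq r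
      have h2 : q * r + r = (q + 1) * r := by ring
      linarith

lemma card_range_filter_mod (r t i b : ℕ) (htr : t < r) (hi : i < r) :
    ((Finset.range (b * r + t)).filter (fun j => j % r = i)).card
      = b + if i < t then 1 else 0 := by
  have hr : 0 < r := lt_of_le_of_lt (Nat.zero_le _) htr
  rw [filter_mod_eq r t i b htr hi,
    Finset.card_image_of_injective _ (fun a b' h => by
      have : a * r = b' * r := by omega
      exact Nat.eq_of_mul_eq_mul_right hr this), Finset.card_range]

lemma card_fin_filter (n : ℕ) (p : ℕ → Prop) [DecidablePred p] :
    ((Finset.univ : Finset (Fin n)).filter (fun v => p v.val)).card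
      = ((Finset.range n).filter p).card := by
  rw [Finset.card_filter, Finset.card_filter,
    Fin.sum_univ_eq_sum_range (fun j => if p j then 1 else 0) n]

lemma card_fin_mod (n r i : ℕ) (hr : 0 < r) (hdvd : r ∣ n) (hi : i < r) :
    ((Finset.univ : Finset (Fin n)).filter (fun v : Fin n => (v : ℕ) % r = i)).card
      = n / r := by
  rw [card_fin_filter n (fun j => j % r = i)]
  have hn : n = (n / r) * r + 0 := by
    rw [add_zero, Nat.div_mul_cancel hdvd]
  rw [show (Finset.range n) = Finset.range ((n / r) * r + 0) from by rw [← hn]]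
  rw [card_range_filter_mod r 0 i (n / r) hr hi]
  simp

lemma turan_deg {n r : ℕ} (hr : 0 < r) (hdvd : r ∣ n) (v : Fin n) :
    (turanGraph n r).degree v = (r - 1) * (n / r) := by
  have hv : (v : ℕ) % r < r := Nat.mod_lt _ hr
  have hsplit := Finset.card_filter_add_card_filter_not
    (s := (Finset.univ : Finset (Fin n))) (p := fun u : Fin n => (u : ℕ) % r = (v : ℕ) % r)
  have hcnt := card_fin_mod n r ((v : ℕ) % r) hr hdvd hv
  have hdeg : (turanGraph n r).degree v
      = ((Finset.univ : Finset (Fin n)).filter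
          (fun u : Fin n => ¬ ((u : ℕ) % r = (v : ℕ) % r))).card := by
    rw [← card_neighborFinset_eq_degree, neighborFinset_eq_filter]
    congr 1
    ext u
    simp only [mem_filter, mem_univ, true_and, mem_neighborSet, turanGraph_adj]
    exact ⟨fun h => fun h2 => h h2.symm, fun h => fun h2 => h h2.symm⟩
  have hcard : (Finset.univ : Finset (Fin n)).card = n := by simp
  have hnr : (r - 1) * (n / r) = n - n / r := by
    have h1 : r * (n / r) = n := Nat.mul_div_cancel' hdvd
    have h2 : (r - 1) * (n / r) + n / r = r * (n / r) := by
      have : r - 1 + 1 = r := Nat.succ_pred_eq_of_pos hr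
      calc (r - 1) * (n / r) + n / r = (r - 1 + 1) * (n / r) := by ring
        _ = r * (n / r) := by rw [this]
    omega
  have hle : n / r ≤ n := Nat.div_le_self n r
  omega

lemma two_ein (S : Finset (Fin n)) :
    2 * (iG n r S).edgeFinset.card
      = ∑ v ∈ S, ((turanGraph n r).neighborFinset v ∩ S).card := by
  rw [← sum_degrees_eq_twice_card_edges]
  have h : ∀ v : Fin n, (iG n r S).degree v
      = if v ∈ S then ((turanGraph n r).neighborFinset v ∩ S).card else 0 := by
    intro v
    by_cases hv : v ∈ S
    · have h2 : (iG n r S).neighborFinset v = (turanGraph n r).neighborFinset v ∩ S := by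
        ext u; rw [mem_neighborFinset]; simp [iG, mem_neighborFinset, hv, Finset.mem_inter, and_comm]
      rw [← card_neighborFinset_eq_degree, h2, if_pos hv]
    · have h2 : (iG n r S).neighborFinset v = ∅ := by
        ext u; rw [mem_neighborFinset]; simp [iG, mem_neighborFinset, hv]
      rw [← card_neighborFinset_eq_degree, h2, if_neg hv, Finset.card_empty]
  rw [Finset.sum_congr rfl (fun v _ => h v), Finset.sum_ite_mem, Finset.univ_inter]

lemma master (hr : 0 < r) (hdvd : r ∣ n) (S : Finset (Fin n)) :
    2 * incidentEdgeCount (turanGraph n r) S + S.card * S.card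
      = 2 * (S.card * ((r - 1) * (n / r)))
        + ∑ i ∈ Finset.range r, cnt n r S i * cnt n r S i := by
  have h1 := master1 (n := n) (r := r) S
  have hdeg : ∑ u ∈ S, (turanGraph n r).degree u = S.card * ((r - 1) * (n / r)) := by
    rw [Finset.sum_congr rfl (fun u _ => turan_deg hr hdvd u), Finset.sum_const, smul_eq_mul]
  have h2 := two_ein (n := n) (r := r) S
  have h3 : ∑ v ∈ S, (((turanGraph n r).neighborFinset v ∩ S).card
        + cnt n r S ((v : ℕ) % r)) = ∑ _v ∈ S, S.card :=
    Finset.sum_congr rfl (fun v _ => inter_card S v)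
  rw [Finset.sum_add_distrib, Finset.sum_const, smul_eq_mul, sum_cnt_sq hr] at h3
  linarith

lemma tangent (b c : ℕ) : 2 * b * c + c ≤ c * c + b * b + b := by
  zify
  have hd : ((c : ℤ) - b) * ((c : ℤ) - b - 1) ≥ 0 := by
    rcases le_or_gt ((c : ℤ) - b) 0 with h | h
    · have h2 : (c : ℤ) - b - 1 ≤ 0 := by linarith
      nlinarith [mul_nonneg (neg_nonneg.2 h) (neg_nonneg.2 h2)]
    · nlinarith
  nlinarith [hd]

lemma choose_two_id (k : ℕ) : 2 * Nat.choose k 2 + k = k * k := by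
  rw [two_mul_choose_two]
  rcases k with _ | m
  · simp
  · simp only [Nat.succ_sub_one]; ring

lemma lower_bound {n r b t k : ℕ} (hr : 2 ≤ r) (hrn : r ≤ n) (hdvd : r ∣ n)
    (hk1 : 1 ≤ k) (hk : k ≤ (r - 1) * (n / r))
    (hkbt : k = b * r + t) (ht : t ≤ r - 1) (S : Finset (Fin n)) (hS : S.card = k) :
    k * ((r - 1) * (n / r)) - Nat.choose k 2 + r * Nat.choose b 2 + b * t
      ≤ incidentEdgeCount (turanGraph n r) S := by
  have hr0 : 0 < r := by omega
  have hmaster := master hr0 hdvd S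
  rw [hS] at hmaster
  have hsumc := sum_cnt hr0 S
  rw [hS] at hsumc
  have hconv : ∀ i ∈ Finset.range r,
      2 * b * cnt n r S i + cnt n r S i ≤ cnt n r S i * cnt n r S i + (b * b + b) :=
    fun i _ => by have := tangent b (cnt n r S i); linarith
  have hsum := Finset.sum_le_sum hconv
  rw [Finset.sum_add_distrib, ← Finset.mul_sum, hsumc, Finset.sum_add_distrib,
    Finset.sum_const, Finset.card_range, smul_eq_mul] at hsum
  have hk2 := choose_two_id k
  have hb2 : 2 * (r * Nat.choose b 2) + r * b = r * (b * b) := by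
    have h := choose_two_id b
    calc 2 * (r * Nat.choose b 2) + r * b = r * (2 * Nat.choose b 2 + b) := by ring
      _ = r * (b * b) := by rw [h]
  have hbk : b * k = r * (b * b) + b * t := by rw [hkbt]; ring
  have hmul : r * (b * b + b) = r * (b * b) + r * b := by ring
  rw [hmul] at hsum
  have hkk : k * k ≤ k * ((r - 1) * (n / r)) := Nat.mul_le_mul_left k hk
  have h0 : Nat.choose k 2 ≤ k * ((r - 1) * (n / r)) := by linarith
  obtain ⟨d, hd⟩ := Nat.exists_eq_add_of_le h0
  rw [hd] at hmaster ⊢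
  rw [Nat.add_sub_cancel_left]
  linarith

lemma filter_lt_range (n k : ℕ) (hkn : k ≤ n) :
    (Finset.range n).filter (fun j => j < k) = Finset.range k := by
  ext j; simp only [Finset.mem_filter, Finset.mem_range]; omega

lemma cnt_S0 {n r b t k : ℕ} (htr : t < r) (hkn : k ≤ n) (hkbt : k = b * r + t)
    (i : ℕ) (hi : i < r) :
    cnt n r ((Finset.univ : Finset (Fin n)).filter (fun v : Fin n => (v : ℕ) < k)) i
      = b + if i < t then 1 else 0 := by
  rw [cnt, Finset.filter_filter,
    card_fin_filter n (fun j => j < k ∧ j % r = i)]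
  have h : (Finset.range n).filter (fun j => j < k ∧ j % r = i)
      = (Finset.range k).filter (fun j => j % r = i) := by
    ext j
    simp only [Finset.mem_filter, Finset.mem_range]
    constructor
    · rintro ⟨_, h1, h2⟩; exact ⟨h1, h2⟩
    · rintro ⟨h1, h2⟩; exact ⟨lt_of_lt_of_le h1 hkn, h1, h2⟩
  rw [h, show Finset.range k = Finset.range (b * r + t) from by rw [← hkbt],
    card_range_filter_mod r t i b htr hi]

lemma upper_value {n r b t k : ℕ} (hr : 2 ≤ r) (hrn : r ≤ n) (hdvd : r ∣ n)
    (hk1 : 1 ≤ k) (hk : k ≤ (r - 1) * (n / r))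
    (hkbt : k = b * r + t) (ht : t ≤ r - 1) (hkn : k ≤ n) :
    incidentEdgeCount (turanGraph n r)
        ((Finset.univ : Finset (Fin n)).filter (fun v : Fin n => (v : ℕ) < k))
      = k * ((r - 1) * (n / r)) - Nat.choose k 2 + r * Nat.choose b 2 + b * t := by
  have hr0 : 0 < r := by omega
  have htr : t < r := by omega
  set S0 := (Finset.univ : Finset (Fin n)).filter (fun v : Fin n => (v : ℕ) < k) with hS0
  have hcard0 : S0.card = k := by
    rw [hS0, card_fin_filter n (fun j => j < k), filter_lt_range n k hkn, Finset.card_range]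
  have hmaster := master hr0 hdvd S0
  rw [hcard0] at hmaster
  have hQ : ∑ i ∈ Finset.range r, cnt n r S0 i * cnt n r S0 i
      = r * (b * b) + (2 * b + 1) * t := by
    have h1 : ∀ i ∈ Finset.range r, cnt n r S0 i * cnt n r S0 i
        = b * b + (if i < t then 2 * b + 1 else 0) := by
      intro i hi
      rw [hS0, cnt_S0 htr hkn hkbt i (Finset.mem_range.1 hi)]
      by_cases hit : i < t
      · rw [if_pos hit, if_pos hit]; ring
      · rw [if_neg hit, if_neg hit]; ring
    rw [Finset.sum_congr rfl h1, Finset.sum_add_distrib, Finset.sum_const,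
      Finset.card_range, smul_eq_mul, Finset.sum_ite, Finset.sum_const,
      Finset.sum_const_zero, add_zero, smul_eq_mul]
    have h2 : (Finset.range r).filter (fun i => i < t) = Finset.range t :=
      filter_lt_range r t (by omega)
    rw [h2, Finset.card_range]
    ring
  rw [hQ] at hmaster
  have hk2 := choose_two_id k
  have hb2 : 2 * (r * Nat.choose b 2) + r * b = r * (b * b) := by
    have h := choose_two_id b
    calc 2 * (r * Nat.choose b 2) + r * b = r * (2 * Nat.choose b 2 + b) := by ring
      _ = r * (b * b) := by rw [h]
  have hbt : (2 * b + 1) * t = 2 * (b * t) + t := by ring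
  have hkk : k * k ≤ k * ((r - 1) * (n / r)) := Nat.mul_le_mul_left k hk
  have h0 : Nat.choose k 2 ≤ k * ((r - 1) * (n / r)) := by linarith
  obtain ⟨d, hd⟩ := Nat.exists_eq_add_of_le h0
  rw [hd] at hmaster ⊢
  rw [Nat.add_sub_cancel_left]
  have hbr : b * r = r * b := Nat.mul_comm b r
  linarith

end Aux

theorem stmt3 (n r b t k : ℕ) (hr : 2 ≤ r) (hrn : r ≤ n) (hdvd : r ∣ n)
    (hk1 : 1 ≤ k) (hk : k ≤ (r - 1) * (n / r))
    (hkbt : k = b * r + t) (ht : t ≤ r - 1) :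
    fileSize (SimpleGraph.turanGraph n r) k =
      k * ((r - 1) * (n / r)) - Nat.choose k 2 + r * Nat.choose b 2 + b * t := by
  have hkn : k ≤ n := le_trans hk (by
    calc (r - 1) * (n / r) ≤ r * (n / r) := mul_le_mul_left (Nat.sub_le r 1) _
      _ = n := Nat.mul_div_cancel' hdvd)
  have hcard0 : ((Finset.univ : Finset (Fin n)).filter
      (fun v : Fin n => (v : ℕ) < k)).card = k := by
    rw [card_fin_filter n (fun j => j < k), filter_lt_range n k hkn, Finset.card_range]
  have hval := upper_value hr hrn hdvd hk1 hk hkbt ht hkn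
  apply le_antisymm
  · exact Nat.sInf_le ⟨_, hcard0, hval.symm⟩
  · have hne : { m | ∃ S : Finset (Fin n), S.card = k
        ∧ m = incidentEdgeCount (turanGraph n r) S }.Nonempty :=
      ⟨_, ⟨_, hcard0, rfl⟩⟩
    rw [fileSize]
    apply le_csInf hne
    rintro m ⟨S, hScard, rfl⟩
    exact lower_bound hr hrn hdvd hk1 hk hkbt ht S hScard
end

section
/- Let α ≥ 2 and let K_{α,α} be the complete bipartite simple graph with both parts of size α. Then for every integer k with 1 ≤ k ≤ α, M_{K_{α,α}}(k) = k·α − k²/4 if k is even, and M_{K_{α,α}}(k) = k·α − (k²−1)/4 if k is odd. -/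
open SimpleGraph

lemma count_lemma (α : ℕ) (S : Finset (Fin α ⊕ Fin α)) :
    incidentEdgeCount (completeBipartiteGraph (Fin α) (Fin α)) S =
      α * α - (α - S.toLeft.card) * (α - S.toRight.card) := by
  classical
  set T : Finset (Fin α × Fin α) :=
    Finset.univ.filter (fun p => Sum.inl p.1 ∈ S ∨ Sum.inr p.2 ∈ S) with hT
  have hset : {e ∈ (completeBipartiteGraph (Fin α) (Fin α)).edgeSet | ∃ v ∈ S, v ∈ e}
      = ↑(T.image (fun p : Fin α × Fin α => s(Sum.inl p.1, Sum.inr p.2))) := by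
    ext e
    induction e using Sym2.ind with
    | _ x y =>
      simp only [Set.mem_setOf_eq, mem_edgeSet, completeBipartiteGraph_adj,
        Finset.coe_image, Set.mem_image, Finset.mem_coe, Finset.mem_filter,
        Finset.mem_univ, true_and, hT]
      constructor
      · rintro ⟨hadj, v, hvS, hv⟩
        rcases x with i | i <;> rcases y with j | j <;> simp at hadj
        · rw [Sym2.mem_iff] at hv
          refine ⟨(i, j), ?_, rfl⟩
          rcases hv with rfl | rfl
          · exact Or.inl hvS
          · exact Or.inr hvS
        · rw [Sym2.mem_iff] at hv
          refine ⟨(j, i), ?_, Sym2.eq_swap⟩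
          rcases hv with rfl | rfl
          · exact Or.inr hvS
          · exact Or.inl hvS
      · rintro ⟨⟨i, j⟩, hp, he⟩
        rw [Sym2.eq, Sym2.rel_iff'] at he
        rcases he with he | he <;>
          simp only [Prod.swap_prod_mk, Prod.mk.injEq] at he <;>
          obtain ⟨hx, hy⟩ := he <;> subst hx <;> subst hy
        · refine ⟨by simp, ?_⟩
          rcases hp with h | h
          · exact ⟨Sum.inl i, h, by simp⟩
          · exact ⟨Sum.inr j, h, by simp⟩
        · refine ⟨by simp, ?_⟩
          rcases hp with h | h
          · exact ⟨Sum.inl i, h, by simp⟩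
          · exact ⟨Sum.inr j, h, by simp⟩
  rw [incidentEdgeCount, hset, Set.ncard_coe_finset]
  have hinj : Set.InjOn (fun p : Fin α × Fin α => s(Sum.inl p.1, Sum.inr p.2)) ↑T := by
    rintro ⟨i, j⟩ _ ⟨i', j'⟩ _ h
    simp only [Sym2.eq, Sym2.rel_iff', Prod.mk.injEq, Sum.inl.injEq, Sum.inr.injEq,
      Prod.swap_prod_mk, reduceCtorEq, and_false, or_false, false_and] at h
    simp [h.1, h.2]
  rw [Finset.card_image_of_injOn hinj]
  have hcompl : Tᶜ = (S.toLeftᶜ ×ˢ S.toRightᶜ) := by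
    ext ⟨i, j⟩
    simp [hT, not_or]
  have := Finset.card_compl T
  rw [hcompl] at this
  have hc : (S.toLeftᶜ ×ˢ S.toRightᶜ).card = (α - S.toLeft.card) * (α - S.toRight.card) := by
    rw [Finset.card_product, Finset.card_compl, Finset.card_compl]
    simp
  rw [hc] at this
  have hcard : Fintype.card (Fin α × Fin α) = α * α := by simp
  have hle := Finset.card_le_univ T
  omega

lemma arith_lemma (a b α : ℕ) (ha : a ≤ α) (hb : b ≤ α) :
    α * α - (α - a) * (α - b) = (a + b) * α - a * b := by
  have h1 : (α - a) * (α - b) ≤ α * α := Nat.mul_le_mul (Nat.sub_le _ _) (Nat.sub_le _ _)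
  have h2 : a * b ≤ (a + b) * α :=
    le_trans (Nat.mul_le_mul le_rfl hb) (Nat.mul_le_mul (Nat.le_add_right a b) le_rfl)
  zify [ha, hb, h1, h2]
  ring

theorem stmt5 (α k : ℕ) (hα : 2 ≤ α) (hk1 : 1 ≤ k) (hk : k ≤ α) :
    (Even k → fileSize (completeBipartiteGraph (Fin α) (Fin α)) k = k * α - k ^ 2 / 4) ∧
    (Odd k → fileSize (completeBipartiteGraph (Fin α) (Fin α)) k = k * α - (k ^ 2 - 1) / 4) := by
  classical
  have hprod : k / 2 * (k - k / 2) = k ^ 2 / 4 := by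
    rcases Nat.even_or_odd k with ⟨m, rfl⟩ | ⟨m, rfl⟩
    · have h1 : (m + m) / 2 = m := by omega
      have h2 : (m + m) ^ 2 / 4 = m * m := by
        rw [show (m + m) ^ 2 = m * m * 4 by ring]
        exact Nat.mul_div_cancel _ (by norm_num)
      rw [h1, h2, show m + m - m = m by omega]
    · have h1 : (2 * m + 1) / 2 = m := by omega
      have h2 : (2 * m + 1) ^ 2 = 4 * (m * (m + 1)) + 1 := by ring
      rw [h1, h2, show 2 * m + 1 - m = m + 1 by omega,
        Nat.mul_add_div (by norm_num)]
      simp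
  have hmem : k * α - k ^ 2 / 4 ∈
      { m | ∃ S : Finset (Fin α ⊕ Fin α), S.card = k ∧
        m = incidentEdgeCount (completeBipartiteGraph (Fin α) (Fin α)) S } := by
    obtain ⟨A, -, hA⟩ := Finset.exists_subset_card_eq
      (s := (Finset.univ : Finset (Fin α))) (n := k / 2)
      (by rw [Finset.card_univ, Fintype.card_fin]; omega)
    obtain ⟨B, -, hB⟩ := Finset.exists_subset_card_eq
      (s := (Finset.univ : Finset (Fin α))) (n := k - k / 2)
      (by rw [Finset.card_univ, Fintype.card_fin]; omega)
    refine ⟨A.disjSum B, by rw [Finset.card_disjSum, hA, hB]; omega, ?_⟩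
    rw [count_lemma, Finset.toLeft_disjSum, Finset.toRight_disjSum, hA, hB,
      arith_lemma _ _ _ (by omega) (by omega), show k / 2 + (k - k / 2) = k by omega, hprod]
  have hlow : ∀ m ∈ { m | ∃ S : Finset (Fin α ⊕ Fin α), S.card = k ∧
        m = incidentEdgeCount (completeBipartiteGraph (Fin α) (Fin α)) S },
      k * α - k ^ 2 / 4 ≤ m := by
    rintro m ⟨S, hScard, rfl⟩
    have hab : S.toLeft.card + S.toRight.card = k := by
      rw [Finset.card_toLeft_add_card_toRight, hScard]
    rw [count_lemma, arith_lemma _ _ _ (by omega) (by omega), hab]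
    refine Nat.sub_le_sub_left ?_ _
    rw [Nat.le_div_iff_mul_le (by norm_num)]
    nlinarith [two_mul_le_add_sq S.toLeft.card S.toRight.card, hab]
  have hmain : fileSize (completeBipartiteGraph (Fin α) (Fin α)) k = k * α - k ^ 2 / 4 := by
    refine le_antisymm (Nat.sInf_le hmem) ?_
    exact hlow _ (Nat.sInf_mem ⟨_, hmem⟩)
  refine ⟨fun _ => hmain, fun hodd => ?_⟩
  rw [hmain]
  congr 1
  obtain ⟨m, rfl⟩ := hodd
  rw [show (2 * m + 1) ^ 2 = 4 * (m * (m + 1)) + 1 by ring]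
  generalize m * (m + 1) = t
  omega
end

section
/- Let G be an α-regular finite simple graph on a nonempty vertex set and let k be an integer with 1 ≤ k ≤ α. Then M_G(k) ≤ k·α − k + 1. -/
open SimpleGraph

lemma incidentEdgeCount_eq_s6 {V : Type*} [Fintype V] [DecidableEq V] (G : SimpleGraph V) [DecidableRel G.Adj]
    (S : Finset V) :
    incidentEdgeCount G S = (S.biUnion (fun t => G.incidenceFinset t)).card := by
  classical
  rw [incidentEdgeCount, ← Set.ncard_coe_finset]
  congr 1
  ext e
  simp [SimpleGraph.mem_incidenceFinset, SimpleGraph.incidenceSet]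

theorem stmt6 {V : Type*} [Fintype V] [Nonempty V] (G : SimpleGraph V) [DecidableRel G.Adj]
    (α k : ℕ) (hreg : G.IsRegularOfDegree α) (hk1 : 1 ≤ k) (hk : k ≤ α) :
    fileSize G k ≤ k * α - k + 1 := by
  classical
  obtain ⟨v⟩ := (inferInstance : Nonempty V)
  -- pick k-1 neighbors of v
  have hcard : k - 1 ≤ (G.neighborFinset v).card := by
    rw [SimpleGraph.card_neighborFinset_eq_degree, hreg v]; omega
  obtain ⟨T, hT, hTcard⟩ := Finset.exists_subset_card_eq hcard
  have hvT : v ∉ T := by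
    intro hv
    exact G.irrefl ((SimpleGraph.mem_neighborFinset G v v).1 (hT hv))
  set S : Finset V := insert v T with hS
  have hScard : S.card = k := by
    rw [hS, Finset.card_insert_of_notMem hvT, hTcard]; omega
  have hle : incidentEdgeCount G S ≤ k * α - k + 1 := by
    rw [incidentEdgeCount_eq_s6]
    have hsub : S.biUnion (fun t => G.incidenceFinset t) ⊆
        G.incidenceFinset v ∪ T.biUnion (fun t => G.incidenceFinset t \ {s(v, t)}) := by
      intro e he
      obtain ⟨u, hu, heu⟩ := Finset.mem_biUnion.1 he
      rw [SimpleGraph.mem_incidenceFinset] at heu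
      by_cases hve : v ∈ e
      · exact Finset.mem_union_left _ (by
          rw [SimpleGraph.mem_incidenceFinset]; exact ⟨heu.1, hve⟩)
      · rcases Finset.mem_insert.1 hu with rfl | hu
        · exact absurd heu.2 hve
        · refine Finset.mem_union_right _ (Finset.mem_biUnion.2 ⟨u, hu, ?_⟩)
          rw [Finset.mem_sdiff, SimpleGraph.mem_incidenceFinset]
          refine ⟨heu, ?_⟩
          simp only [Finset.mem_singleton]
          intro h
          exact hve (h ▸ Sym2.mem_mk_left v u)
    calc (S.biUnion (fun t => G.incidenceFinset t)).card
        ≤ (G.incidenceFinset v ∪ T.biUnion (fun t => G.incidenceFinset t \ {s(v, t)})).card :=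
          Finset.card_le_card hsub
      _ ≤ (G.incidenceFinset v).card
          + (T.biUnion (fun t => G.incidenceFinset t \ {s(v, t)})).card :=
          Finset.card_union_le _ _
      _ ≤ α + ∑ t ∈ T, (G.incidenceFinset t \ {s(v, t)}).card := by
          rw [SimpleGraph.card_incidenceFinset_eq_degree, hreg v]
          exact Nat.add_le_add_left (Finset.card_biUnion_le) _
      _ ≤ α + ∑ t ∈ T, (α - 1) := by
          refine Nat.add_le_add_left (Finset.sum_le_sum fun t ht => ?_) _
          have hmem : s(v, t) ∈ G.incidenceFinset t := by
            rw [SimpleGraph.mem_incidenceFinset]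
            exact ⟨(SimpleGraph.mem_neighborFinset G v t).1 (hT ht),
              Sym2.mem_mk_right v t⟩
          rw [Finset.card_sdiff_of_subset (Finset.singleton_subset_iff.2 hmem),
            SimpleGraph.card_incidenceFinset_eq_degree, hreg t, Finset.card_singleton]
      _ = α + (k - 1) * (α - 1) := by rw [Finset.sum_const, hTcard]; rfl
      _ ≤ k * α - k + 1 := by
          have h1 : 1 ≤ α := le_trans hk1 hk
          have h2 : (k - 1 + 1) * (α - 1 + 1) = (k-1)*(α-1) + (k-1) + (α-1) + 1 := by ring
          have h3 : k - 1 + 1 = k := by omega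
          have h4 : α - 1 + 1 = α := by omega
          rw [h3, h4] at h2
          omega
  calc fileSize G k ≤ incidentEdgeCount G S :=
        Nat.sInf_le ⟨S, hScard, rfl⟩
    _ ≤ k * α - k + 1 := hle
end

section
/- Let n, α, k be integers with α ≥ 2, k ≥ 1 and n ≥ α·k − α − k + 3. Define φ : {1,…,k} → ℤ by φ(1) = α and φ(ℓ+1) = φ(ℓ) + α − ⌈(2·φ(ℓ) − ℓ·α)/(n − ℓ)⌉ for 1 ≤ ℓ ≤ k−1, where ⌈·⌉ denotes the ceiling of the rational number. Then φ(k) = k·α − k + 1. -/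
/-- The recursive bound `φ` of El Rouayheb and Ramchandran for `ρ = 2`:
`φ(1) = α` and `φ(ℓ+1) = φ(ℓ) + α - ⌈(2φ(ℓ) - ℓα)/(n - ℓ)⌉`. -/
noncomputable def phiBound (n α : ℤ) : ℕ → ℤ
  | 0 => α
  | 1 => α
  | (ℓ + 2) =>
      phiBound n α (ℓ + 1) + α -
        ⌈((2 * phiBound n α (ℓ + 1) - ((ℓ : ℤ) + 1) * α : ℤ) : ℚ) / ((n : ℚ) - ((ℓ : ℚ) + 1))⌉

lemma ceil_div_eq_one (a b : ℤ) (hb : 0 < b) (h1 : 0 < a) (h2 : a ≤ b) :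
    ⌈((a : ℚ) / (b : ℚ))⌉ = 1 := by
  have hb' : (0 : ℚ) < (b : ℚ) := by exact_mod_cast hb
  have h1' : (0 : ℚ) < (a : ℚ) := by exact_mod_cast h1
  have h2' : (a : ℚ) ≤ (b : ℚ) := by exact_mod_cast h2
  rw [Int.ceil_eq_iff]
  constructor
  · norm_num
    positivity
  · push_cast
    rw [div_le_one hb']
    exact h2'
    
lemma phi_aux (n α : ℤ) (k : ℕ) (hα : 2 ≤ α)
    (hn : α * (k : ℤ) - α - (k : ℤ) + 3 ≤ n) :
    ∀ ℓ : ℕ, 1 ≤ ℓ → ℓ ≤ k → phiBound n α ℓ = (ℓ : ℤ) * α - (ℓ : ℤ) + 1 := by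
  intro ℓ
  induction ℓ with
  | zero => omega
  | succ m ih =>
    intro _ hle
    match m, ih, hle with
    | 0, _, _ => simp [phiBound]
    | p + 1, ih, hle =>
      have hIH : phiBound n α (p + 1) = ((p : ℤ) + 1) * α - ((p : ℤ) + 1) + 1 := by
        have := ih (by omega) (by omega)
        push_cast at this ⊢
        linarith
      have hk1 : ((p : ℤ) + 1) ≤ (k : ℤ) - 1 := by
        have : (p : ℤ) + 2 ≤ (k : ℤ) := by exact_mod_cast hle
        omega
      -- numerator
      have hnum : 2 * phiBound n α (p + 1) - ((p : ℤ) + 1) * α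
          = ((p : ℤ) + 1) * (α - 2) + 2 := by rw [hIH]; ring
      have hb : 0 < n - ((p : ℤ) + 1) := by nlinarith
      have h1 : 0 < ((p : ℤ) + 1) * (α - 2) + 2 := by nlinarith
      have h2 : ((p : ℤ) + 1) * (α - 2) + 2 ≤ n - ((p : ℤ) + 1) := by nlinarith
      have hceil : ⌈((2 * phiBound n α (p + 1) - ((p : ℤ) + 1) * α : ℤ) : ℚ) /
          ((n : ℚ) - ((p : ℚ) + 1))⌉ = 1 := by
        have hden : (n : ℚ) - ((p : ℚ) + 1) = ((n - ((p : ℤ) + 1) : ℤ) : ℚ) := by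
          push_cast; ring
        rw [hnum, hden]
        exact ceil_div_eq_one _ _ hb h1 h2
      show phiBound n α (p + 2) = _
      rw [phiBound, hceil, hIH]
      push_cast
      ring

theorem stmt9 (n α : ℤ) (k : ℕ) (hα : 2 ≤ α) (hk : 1 ≤ k)
    (hn : α * (k : ℤ) - α - (k : ℤ) + 3 ≤ n) :
    phiBound n α k = (k : ℤ) * α - (k : ℤ) + 1 := by
  exact phi_aux n α k hα hn k hk le_rfl
end

section
/- For every even integer α ≥ 2 and every odd integer n with 2n ≥ 5α, there exists an α-regular finite simple graph on n vertices that contains no triangle (no clique on 3 vertices). -/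
open SimpleGraph

open Finset in
private lemma my_transfer {V : Type} [Fintype V] {n d : ℕ} (G : SimpleGraph V)
    [DecidableRel G.Adj] (e : V ≃ Fin n) (h1 : G.IsRegularOfDegree d) (h2 : G.CliqueFree 3) :
    ∃ G' : SimpleGraph (Fin n), ∃ _ : DecidableRel G'.Adj,
      G'.IsRegularOfDegree d ∧ G'.CliqueFree 3 := by
  classical
  refine ⟨G.comap ⇑e.symm.toEmbedding, fun a b => inferInstanceAs (Decidable (G.Adj _ _)), ?_, ?_⟩
  · intro w
    have key : (G.comap ⇑e.symm.toEmbedding).neighborFinset w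
        = (G.neighborFinset (e.symm w)).map e.toEmbedding := by
      ext v
      simp only [mem_neighborFinset, comap_adj, Finset.mem_map, Equiv.coe_toEmbedding]
      constructor
      · intro h; exact ⟨e.symm v, h, by simp⟩
      · rintro ⟨u, h, rfl⟩; simpa using h
    rw [SimpleGraph.degree]
    have hk := congrArg Finset.card key
    rw [Finset.card_map] at hk
    convert hk.trans (h1 _)
  · exact h2.comap (SimpleGraph.Embedding.comap e.symm.toEmbedding G).isContained

section Circ
open Finset
variable (n m t : ℕ)

private def Gcirc [NeZero n] (hm : n = 2*m+1) (htm : 2*t ≤ m) (ht : 1 ≤ t) :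
    SimpleGraph (ZMod n) where
  Adj u v := m + 1 - t ≤ (v - u).val ∧ (v - u).val ≤ m + t
  symm := by
    constructor; intro u v ⟨h1, h2⟩
    have hne : v - u ≠ 0 := by
      intro h0; rw [h0] at h1; simp [ZMod.val_zero] at h1; omega
    have h3 : u - v = -(v - u) := by ring
    rw [h3, ZMod.neg_val]
    simp only [hne, if_false]
    have hlt : (v - u).val < n := ZMod.val_lt _
    omega
  loopless := by constructor; intro u ⟨h1, h2⟩; simp [ZMod.val_zero] at h1 h2; omega

private instance GcircDec [NeZero n] (hm : n = 2*m+1) (htm : 2*t ≤ m) (ht : 1 ≤ t) :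
    DecidableRel (Gcirc n m t hm htm ht).Adj :=
  fun _ _ => inferInstanceAs (Decidable (_ ∧ _))

private lemma Gcirc_reg [NeZero n] (hm : n = 2*m+1) (htm : 2*t ≤ m) (ht : 1 ≤ t) :
    (Gcirc n m t hm htm ht).IsRegularOfDegree (2*t) := by
  intro u
  classical
  have key : (Gcirc n m t hm htm ht).neighborFinset u
      = (Finset.Icc (m+1-t) (m+t)).image (fun s : ℕ => ((u + (s : ZMod n) : ZMod n))) := by
    ext v
    rw [mem_neighborFinset]; simp only [Gcirc, Finset.mem_image, Finset.mem_Icc]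
    constructor
    · rintro ⟨h1, h2⟩
      exact ⟨(v - u).val, ⟨h1, h2⟩, by rw [ZMod.natCast_rightInverse]; ring⟩
    · rintro ⟨s, ⟨hs1, hs2⟩, rfl⟩
      have h3 : (u + (s:ZMod n)) - u = (s : ZMod n) := by ring
      rw [h3, ZMod.val_cast_of_lt (by omega)]
      exact ⟨hs1, hs2⟩
  rw [SimpleGraph.degree, key, Finset.card_image_of_injOn, Nat.card_Icc]
  · omega
  · intro s hs s' hs' h
    simp only [Finset.coe_Icc, Set.mem_Icc] at hs hs'
    have h2 : ((s:ZMod n)) = (s' : ZMod n) := by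
      have h4 := congrArg (fun x => x - u) h
      simpa using h4
    have h5 := congrArg ZMod.val h2
    rwa [ZMod.val_cast_of_lt (by omega), ZMod.val_cast_of_lt (by omega)] at h5

private lemma Gcirc_cf [NeZero n] (hm : n = 2*m+1) (htm : 2*t ≤ m) (ht : 1 ≤ t)
    (hn6 : 6*t ≤ n + 2) : (Gcirc n m t hm htm ht).CliqueFree 3 := by
  intro s hs
  rw [is3Clique_iff] at hs
  obtain ⟨x, y, z, hxy, hxz, hyz, -⟩ := hs
  obtain ⟨h1, h2⟩ := hxy
  obtain ⟨h3, h4⟩ := hxz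
  obtain ⟨h5, h6⟩ := hyz
  have hsum : (z - x) = (z - y) + (y - x) := by ring
  have hv : (z - x).val = ((z - y).val + (y - x).val) % n := by
    rw [hsum, ZMod.val_add]
  have l1 : (y-x).val < n := ZMod.val_lt _
  have l2 : (z-y).val < n := ZMod.val_lt _
  rcases Nat.lt_or_ge ((z - y).val + (y - x).val) n with hlt | hge
  · rw [Nat.mod_eq_of_lt hlt] at hv; omega
  · have h7 : ((z - y).val + (y - x).val) % n = (z - y).val + (y - x).val - n := by
      rw [Nat.mod_eq_sub_mod hge, Nat.mod_eq_of_lt (by omega)]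
    rw [h7] at hv; omega
end Circ

section Blow
open Finset

private abbrev BV (a t b : ℕ) := Fin a ⊕ Fin t ⊕ ZMod b ⊕ ZMod b ⊕ Fin t

private def bAdj (a t b : ℕ) : BV a t b → BV a t b → Bool
  | .inl _, .inr (.inl _) => true
  | .inl _, .inr (.inr (.inr (.inr _))) => true
  | .inr (.inl _), .inr (.inr (.inl _)) => true
  | .inr (.inr (.inl u)), .inr (.inr (.inr (.inl v))) => decide ((v - u).val < t)
  | .inr (.inr (.inr (.inl _))), .inr (.inr (.inr (.inr _))) => true
  | _, _ => false

private def GB (a t b : ℕ) : SimpleGraph (BV a t b) where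
  Adj x y := bAdj a t b x y = true ∨ bAdj a t b y x = true
  symm := ⟨fun _ _ h => h.symm⟩
  loopless := by
    constructor; rintro (u|u|u|u|u) (h|h) <;> simp [bAdj] at h

private lemma GB_adj (a t b : ℕ) (x y : BV a t b) :
    (GB a t b).Adj x y ↔ (bAdj a t b x y = true ∨ bAdj a t b y x = true) := Iff.rfl

private instance GBDec (a t b : ℕ) : DecidableRel (GB a t b).Adj :=
  fun x y => decidable_of_iff _ (GB_adj a t b x y).symm

private lemma GB_cf (a t b : ℕ) : (GB a t b).CliqueFree 3 := by
  intro s hs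
  rw [is3Clique_iff] at hs
  obtain ⟨x, y, z, hxy, hxz, hyz, -⟩ := hs
  rw [GB_adj] at hxy hxz hyz
  rcases x with u|u|u|u|u <;> rcases y with v|v|v|v|v <;> rcases z with w|w|w|w|w <;>
    simp only [bAdj, Bool.false_eq_true, or_self, or_false, false_or] at hxy hxz hyz

variable {a t b : ℕ}

private def eA : Fin a ↪ BV a t b := ⟨fun i => .inl i, fun _ _ h => by simpa using h⟩
private def eB : Fin t ↪ BV a t b := ⟨fun i => .inr (.inl i), fun _ _ h => by simpa using h⟩
private def eC : ZMod b ↪ BV a t b :=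
  ⟨fun v => .inr (.inr (.inl v)), fun _ _ h => by simpa using h⟩
private def eD : ZMod b ↪ BV a t b :=
  ⟨fun v => .inr (.inr (.inr (.inl v))), fun _ _ h => by simpa using h⟩
private def eE : Fin t ↪ BV a t b :=
  ⟨fun i => .inr (.inr (.inr (.inr i))), fun _ _ h => by simpa using h⟩

private lemma hfilt [NeZero b] (ht : t ≤ b) (u : ZMod b) :
    (univ.filter fun v : ZMod b => (v - u).val < t).card = t := by
  have himg : (univ.filter fun v : ZMod b => (v - u).val < t)
      = (Finset.range t).image (fun s : ℕ => (u + (s : ZMod b) : ZMod b)) := by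
    ext v
    simp only [mem_filter, mem_univ, true_and, mem_image, mem_range]
    constructor
    · intro h; exact ⟨(v-u).val, h, by rw [ZMod.natCast_rightInverse]; ring⟩
    · rintro ⟨s, hs, rfl⟩
      have h3 : (u + (s:ZMod b)) - u = (s:ZMod b) := by ring
      rw [h3, ZMod.val_cast_of_lt (by omega)]; exact hs
  rw [himg, Finset.card_image_of_injOn, Finset.card_range]
  intro s hs s' hs' h
  simp only [coe_range, Set.mem_Iio] at hs hs'
  have h2 : ((s:ZMod b)) = (s':ZMod b) := by
    have h6 := congrArg (fun x => x - u) h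
    simpa using h6
  have h4 := congrArg ZMod.val h2
  rwa [ZMod.val_cast_of_lt (by omega), ZMod.val_cast_of_lt (by omega)] at h4

private lemma GB_reg [NeZero b] (hab : a + b = 2*t) (htb : t ≤ b) :
    (GB a t b).IsRegularOfDegree (2*t) := by
  classical
  intro x
  rw [SimpleGraph.degree]
  rcases x with u|u|u|u|u
  · have key : (GB a t b).neighborFinset (.inl u)
        = (univ.map eB) ∪ (univ.map eE) := by
      ext y
      rcases y with v|v|v|v|v <;>
        simp [mem_neighborFinset, GB_adj, bAdj, eA, eB, eC, eD, eE, DFunLike.coe]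
    rw [key, Finset.card_union_of_disjoint (by simp [Finset.disjoint_left, eB, eE, DFunLike.coe])]
    simp; omega
  · have key : (GB a t b).neighborFinset (.inr (.inl u))
        = (univ.map eA) ∪ (univ.map eC) := by
      ext y
      rcases y with v|v|v|v|v <;>
        simp [mem_neighborFinset, GB_adj, bAdj, eA, eB, eC, eD, eE, DFunLike.coe]
    rw [key, Finset.card_union_of_disjoint (by simp [Finset.disjoint_left, eA, eC, DFunLike.coe])]
    simp [ZMod.card]; omega
  · have key : (GB a t b).neighborFinset (.inr (.inr (.inl u)))
        = (univ.map eB) ∪ ((univ.filter fun v : ZMod b => (v - u).val < t).map eD) := by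
      ext y
      rcases y with v|v|v|v|v <;>
        simp [mem_neighborFinset, GB_adj, bAdj, eA, eB, eC, eD, eE, DFunLike.coe]
    rw [key, Finset.card_union_of_disjoint (by simp [Finset.disjoint_left, eB, eD, DFunLike.coe])]
    rw [Finset.card_map, Finset.card_map, hfilt htb]
    simp; omega
  · have key : (GB a t b).neighborFinset (.inr (.inr (.inr (.inl u))))
        = ((univ.filter fun v : ZMod b => (u - v).val < t).map eC) ∪ (univ.map eE) := by
      ext y
      rcases y with v|v|v|v|v <;>
        simp [mem_neighborFinset, GB_adj, bAdj, eA, eB, eC, eD, eE, DFunLike.coe]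
    rw [key, Finset.card_union_of_disjoint (by simp [Finset.disjoint_left, eC, eE, DFunLike.coe])]
    have h5 : (univ.filter fun v : ZMod b => (u - v).val < t).card = t := by
      have himg : (univ.filter fun v : ZMod b => (u - v).val < t)
          = (univ.filter fun v : ZMod b => (v - (-u)).val < t).image (fun v => -v) := by
        ext v
        simp only [mem_filter, mem_univ, true_and, mem_image]
        constructor
        · intro h; exact ⟨-v, by rw [show -v - -u = u - v by ring]; exact h, by ring⟩
        · rintro ⟨w, hw, rfl⟩; rw [show u - -w = w - -u by ring]; exact hw
      rw [himg, Finset.card_image_of_injOn (fun x _ y _ h => by simpa using congrArg Neg.neg h),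
        hfilt htb]
    rw [Finset.card_map, Finset.card_map, h5]
    simp; omega
  · have key : (GB a t b).neighborFinset (.inr (.inr (.inr (.inr u))))
        = (univ.map eD) ∪ (univ.map eA) := by
      ext y
      rcases y with v|v|v|v|v <;>
        simp [mem_neighborFinset, GB_adj, bAdj, eA, eB, eC, eD, eE, DFunLike.coe]
    rw [key, Finset.card_union_of_disjoint (by simp [Finset.disjoint_left, eA, eD, DFunLike.coe])]
    simp [ZMod.card]; omega
end Blow

theorem stmt11 (α n : ℕ) (hα : 2 ≤ α) (hαe : Even α) (hn : Odd n) (h5α : 5 * α ≤ 2 * n) :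
    ∃ G : SimpleGraph (Fin n), ∃ _ : DecidableRel G.Adj,
      G.IsRegularOfDegree α ∧ G.CliqueFree 3 := by
  obtain ⟨t, htα⟩ := hαe
  obtain ⟨m, hm⟩ := hn
  have ht1 : 1 ≤ t := by omega
  have hα2 : α = 2 * t := by omega
  subst hα2
  by_cases hc : 6 * t ≤ n + 2
  · -- circulant case
    haveI : NeZero n := ⟨by omega⟩
    have htm : 2 * t ≤ m := by omega
    have e : ZMod n ≃ Fin n := Fintype.equivFinOfCardEq (ZMod.card n)
    exact my_transfer _ e (Gcirc_reg n m t hm htm ht1) (Gcirc_cf n m t hm htm ht1 hc)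
  · -- blow-up case
    set a := 6 * t - n with ha
    set b := n - 4 * t with hb
    haveI : NeZero b := ⟨by omega⟩
    have hab : a + b = 2 * t := by omega
    have htb : t ≤ b := by omega
    have hcard : Fintype.card (BV a t b) = n := by
      simp [ZMod.card]
      omega
    have e : BV a t b ≃ Fin n := Fintype.equivFinOfCardEq hcard
    exact my_transfer _ e (GB_reg hab htb) (GB_cf a t b)
end

section
/- For every integer α > 2 there is no α-regular finite simple graph on 2α + 1 vertices that is triangle-free; that is, every α-regular simple graph on 2α+1 vertices contains three pairwise adjacent vertices. -/
open SimpleGraph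

theorem stmt12 {V : Type*} [Fintype V] (G : SimpleGraph V) [DecidableRel G.Adj]
    (α : ℕ) (hα : 2 < α) (hcard : Fintype.card V = 2 * α + 1)
    (hreg : G.IsRegularOfDegree α) :
    ∃ s : Finset V, G.IsNClique 3 s := by
  classical
  by_contra h
  push_neg at h
  have htri : ∀ a b c : V, G.Adj a b → G.Adj a c → G.Adj b c → False := by
    intro a b c hab hac hbc
    exact h {a, b, c} (is3Clique_triple_iff.mpr ⟨hab, hac, hbc⟩)
  have hVne : Nonempty V := by
    rw [← Fintype.card_pos_iff, hcard]; omega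
  obtain ⟨v⟩ := hVne
  have hne : (G.neighborFinset v).Nonempty := by
    rw [← Finset.card_pos]
    rw [show (G.neighborFinset v).card = α from hreg v]; omega
  obtain ⟨u, hu⟩ := hne
  rw [mem_neighborFinset] at hu
  set A := G.neighborFinset v with hA
  set B := G.neighborFinset u with hB
  have hdisj : Disjoint A B := by
    rw [Finset.disjoint_left]
    intro x hxA hxB
    rw [hA, mem_neighborFinset] at hxA
    rw [hB, mem_neighborFinset] at hxB
    exact htri v u x hu hxA hxB
  have hcardA : A.card = α := hreg v
  have hcardB : B.card = α := hreg u
  have hcardAB : (A ∪ B).card = 2 * α := by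
    rw [Finset.card_union_of_disjoint hdisj, hcardA, hcardB]; ring
  have hcompl : ((A ∪ B)ᶜ : Finset V).card = 1 := by
    rw [Finset.card_compl, hcardAB, hcard]; omega
  obtain ⟨w, hw⟩ := Finset.card_eq_one.mp hcompl
  have hwAB : w ∉ A ∪ B := by
    have hm : w ∈ ((A ∪ B)ᶜ : Finset V) := by rw [hw]; exact Finset.mem_singleton_self w
    simpa using hm
  have hcover : ∀ z : V, z ≠ w → z ∈ A ∪ B := by
    intro z hz
    by_contra hzAB
    have hm : z ∈ ((A ∪ B)ᶜ : Finset V) := by simpa using hzAB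
    rw [hw, Finset.mem_singleton] at hm
    exact hz hm
  have hwA : w ∉ A := fun hmem => hwAB (Finset.mem_union_left _ hmem)
  have hwB : w ∉ B := fun hmem => hwAB (Finset.mem_union_right _ hmem)
  have hwv : ¬ G.Adj w v := by
    intro hadj
    exact hwA (by rw [hA, mem_neighborFinset]; exact hadj.symm)
  have hwu : ¬ G.Adj w u := by
    intro hadj
    exact hwB (by rw [hB, mem_neighborFinset]; exact hadj.symm)
  have hvB : v ∈ B := by rw [hB, mem_neighborFinset]; exact hu.symm
  have huA : u ∈ A := by rw [hA, mem_neighborFinset]; exact hu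
  -- A ∩ N(w) is nonempty
  have hxne : (A ∩ G.neighborFinset w).Nonempty := by
    rw [Finset.nonempty_iff_ne_empty]
    intro he
    have hsub : G.neighborFinset w ⊆ B.erase v := by
      intro z hz
      have hzw : G.Adj w z := by rwa [mem_neighborFinset] at hz
      have hzAB := hcover z hzw.ne'
      have hzA : z ∉ A := by
        intro hzA
        have hmm : z ∈ A ∩ G.neighborFinset w := Finset.mem_inter.mpr ⟨hzA, hz⟩
        simp [he] at hmm
      have hzB : z ∈ B := by
        rcases Finset.mem_union.mp hzAB with h' | h'
        · exact absurd h' hzA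
        · exact h'
      refine Finset.mem_erase.mpr ⟨?_, hzB⟩
      intro hzv; subst hzv; exact hwv hzw
    have hle := Finset.card_le_card hsub
    rw [show (G.neighborFinset w).card = α from hreg w, Finset.card_erase_of_mem hvB, hcardB] at hle
    omega
  -- B ∩ N(w) is nonempty
  have hyne : (B ∩ G.neighborFinset w).Nonempty := by
    rw [Finset.nonempty_iff_ne_empty]
    intro he
    have hsub : G.neighborFinset w ⊆ A.erase u := by
      intro z hz
      have hzw : G.Adj w z := by rwa [mem_neighborFinset] at hz
      have hzAB := hcover z hzw.ne'
      have hzB : z ∉ B := by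
        intro hzB
        have hmm : z ∈ B ∩ G.neighborFinset w := Finset.mem_inter.mpr ⟨hzB, hz⟩
        simp [he] at hmm
      have hzA : z ∈ A := by
        rcases Finset.mem_union.mp hzAB with h' | h'
        · exact h'
        · exact absurd h' hzB
      refine Finset.mem_erase.mpr ⟨?_, hzA⟩
      intro hzu; subst hzu; exact hwu hzw
    have hle := Finset.card_le_card hsub
    rw [show (G.neighborFinset w).card = α from hreg w, Finset.card_erase_of_mem huA, hcardA] at hle
    omega
  -- from x ∈ A ∩ N(w), bound |B ∩ N(w)| ≤ 1
  have hbB : (B ∩ G.neighborFinset w).card ≤ 1 := by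
    obtain ⟨x, hx⟩ := hxne
    obtain ⟨hxA, hxw⟩ := Finset.mem_inter.mp hx
    have hadjwx : G.Adj w x := by rwa [mem_neighborFinset] at hxw
    have hadjvx : G.Adj v x := by rwa [hA, mem_neighborFinset] at hxA
    have hsub : G.neighborFinset x ⊆ (B \ G.neighborFinset w) ∪ {w} := by
      intro z hz
      have hxz : G.Adj x z := by rwa [mem_neighborFinset] at hz
      by_cases hzw : z = w
      · exact Finset.mem_union_right _ (Finset.mem_singleton.mpr hzw)
      · have hzAB := hcover z hzw
        have hzA : z ∉ A := by
          intro hzA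
          have hadjvz : G.Adj v z := by rwa [hA, mem_neighborFinset] at hzA
          exact htri v x z hadjvx hadjvz hxz
        have hzB : z ∈ B := by
          rcases Finset.mem_union.mp hzAB with h' | h'
          · exact absurd h' hzA
          · exact h'
        have hznw : z ∉ G.neighborFinset w := by
          intro hzw'
          have hadjwz : G.Adj w z := by rwa [mem_neighborFinset] at hzw'
          exact htri w x z hadjwx hadjwz hxz
        exact Finset.mem_union_left _ (Finset.mem_sdiff.mpr ⟨hzB, hznw⟩)
    have hle := Finset.card_le_card hsub
    have h1 := Finset.card_union_le (B \ G.neighborFinset w) ({w} : Finset V)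
    have h2 : (B ∩ G.neighborFinset w).card + (B \ G.neighborFinset w).card = B.card :=
      Finset.card_inter_add_card_sdiff B (G.neighborFinset w)
    rw [show (G.neighborFinset x).card = α from hreg x] at hle
    simp only [Finset.card_singleton] at h1
    omega
  -- from y ∈ B ∩ N(w), bound |A ∩ N(w)| ≤ 1
  have haA : (A ∩ G.neighborFinset w).card ≤ 1 := by
    obtain ⟨y, hy⟩ := hyne
    obtain ⟨hyB, hyw⟩ := Finset.mem_inter.mp hy
    have hadjwy : G.Adj w y := by rwa [mem_neighborFinset] at hyw
    have hadjuy : G.Adj u y := by rwa [hB, mem_neighborFinset] at hyB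
    have hsub : G.neighborFinset y ⊆ (A \ G.neighborFinset w) ∪ {w} := by
      intro z hz
      have hyz : G.Adj y z := by rwa [mem_neighborFinset] at hz
      by_cases hzw : z = w
      · exact Finset.mem_union_right _ (Finset.mem_singleton.mpr hzw)
      · have hzAB := hcover z hzw
        have hzB : z ∉ B := by
          intro hzB
          have hadjuz : G.Adj u z := by rwa [hB, mem_neighborFinset] at hzB
          exact htri u y z hadjuy hadjuz hyz
        have hzA : z ∈ A := by
          rcases Finset.mem_union.mp hzAB with h' | h'
          · exact h'
          · exact absurd h' hzB
        have hznw : z ∉ G.neighborFinset w := by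
          intro hzw'
          have hadjwz : G.Adj w z := by rwa [mem_neighborFinset] at hzw'
          exact htri w y z hadjwy hadjwz hyz
        exact Finset.mem_union_left _ (Finset.mem_sdiff.mpr ⟨hzA, hznw⟩)
    have hle := Finset.card_le_card hsub
    have h1 := Finset.card_union_le (A \ G.neighborFinset w) ({w} : Finset V)
    have h2 : (A ∩ G.neighborFinset w).card + (A \ G.neighborFinset w).card = A.card :=
      Finset.card_inter_add_card_sdiff A (G.neighborFinset w)
    rw [show (G.neighborFinset y).card = α from hreg y] at hle
    simp only [Finset.card_singleton] at h1
    omega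
  -- N(w) ⊆ (A ∩ N(w)) ∪ (B ∩ N(w)), so α ≤ 2
  have hsub : G.neighborFinset w ⊆ (A ∩ G.neighborFinset w) ∪ (B ∩ G.neighborFinset w) := by
    intro z hz
    have hzw : G.Adj w z := by rwa [mem_neighborFinset] at hz
    rcases Finset.mem_union.mp (hcover z hzw.ne') with h' | h'
    · exact Finset.mem_union_left _ (Finset.mem_inter.mpr ⟨h', hz⟩)
    · exact Finset.mem_union_right _ (Finset.mem_inter.mpr ⟨h', hz⟩)
  have hle := Finset.card_le_card hsub
  have h1 := Finset.card_union_le (A ∩ G.neighborFinset w) (B ∩ G.neighborFinset w)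
  rw [show (G.neighborFinset w).card = α from hreg w] at hle
  omega
end

section
/- Let G be an α-regular finite simple graph on n vertices that contains a triangle (three pairwise adjacent vertices), and suppose that every set of 4 vertices of G induces at most 4 edges. Then n ≥ 3α − 3. -/
open SimpleGraph

/-- The number of edges of `G` with both endpoints in `S`. -/
noncomputable def inducedEdgeCount {V : Type*} (G : SimpleGraph V) (S : Finset V) : ℕ :=
  {e ∈ G.edgeSet | ∀ v ∈ e, v ∈ S}.ncard

lemma key_aux {V : Type*} [Fintype V] (G : SimpleGraph V)
    (h4 : ∀ S : Finset V, S.card = 4 → inducedEdgeCount G S ≤ 4)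
    {a b c v : V} (hab : G.Adj a b) (hac : G.Adj a c) (hbc : G.Adj b c)
    (hva : G.Adj v a) (hvb : G.Adj v b) : v = c := by
  classical
  by_contra hvc
  have hab' := hab.ne
  have hac' := hac.ne
  have hbc' := hbc.ne
  have hva' := hva.ne
  have hvb' := hvb.ne
  set S : Finset V := {a, b, c, v} with hS
  have hScard : S.card = 4 := by
    rw [hS]
    rw [Finset.card_insert_of_notMem (by simp [hab', hac', hva'.symm]),
      Finset.card_insert_of_notMem (by simp [hbc', hvb'.symm]),
      Finset.card_insert_of_notMem (by simp only [Finset.mem_singleton]; exact fun h => hvc h.symm),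
      Finset.card_singleton]
  have h := h4 S hScard
  set T : Finset (Sym2 V) := {s(a,b), s(a,c), s(b,c), s(v,a), s(v,b)} with hT
  have hTcard : T.card = 5 := by
    rw [hT]
    rw [Finset.card_insert_of_notMem (by simp [Sym2.eq_iff, hab', hac', hbc', hva', hvb', hvc, hab'.symm, hac'.symm, hbc'.symm, hva'.symm, hvb'.symm, Ne.symm hvc]),
      Finset.card_insert_of_notMem (by simp [Sym2.eq_iff, hab', hac', hbc', hva', hvb', hvc, hab'.symm, hac'.symm, hbc'.symm, hva'.symm, hvb'.symm, Ne.symm hvc]),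
      Finset.card_insert_of_notMem (by simp [Sym2.eq_iff, hab', hac', hbc', hva', hvb', hvc, hab'.symm, hac'.symm, hbc'.symm, hva'.symm, hvb'.symm, Ne.symm hvc]),
      Finset.card_insert_of_notMem (by simp [Sym2.eq_iff, hab', hac', hbc', hva', hvb', hvc, hab'.symm, hac'.symm, hbc'.symm, hva'.symm, hvb'.symm, Ne.symm hvc]),
      Finset.card_singleton]
  have hsub : (T : Set (Sym2 V)) ⊆ {e ∈ G.edgeSet | ∀ w ∈ e, w ∈ S} := by
    intro e he
    simp only [hT, Finset.coe_insert, Set.mem_insert_iff, Finset.coe_singleton,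
      Set.mem_singleton_iff] at he
    have hmem : ∀ x y : V, G.Adj x y → x ∈ S → y ∈ S →
        s(x, y) ∈ {e ∈ G.edgeSet | ∀ w ∈ e, w ∈ S} := by
      intro x y hxy hx hy
      refine ⟨hxy, fun w hw => ?_⟩
      rcases Sym2.mem_iff.1 hw with rfl | rfl <;> assumption
    have ha : a ∈ S := by simp [hS]
    have hb : b ∈ S := by simp [hS]
    have hc : c ∈ S := by simp [hS]
    have hv : v ∈ S := by simp [hS]
    rcases he with rfl | rfl | rfl | rfl | rfl
    · exact hmem a b hab ha hb
    · exact hmem a c hac ha hc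
    · exact hmem b c hbc hb hc
    · exact hmem v a hva hv ha
    · exact hmem v b hvb hv hb
  have h5 : 5 ≤ inducedEdgeCount G S := by
    have := Set.ncard_le_ncard hsub (Set.toFinite _)
    rwa [Set.ncard_coe_finset, hTcard] at this
  omega

theorem stmt13 {V : Type*} [Fintype V] (G : SimpleGraph V) [DecidableRel G.Adj]
    (α : ℕ) (hreg : G.IsRegularOfDegree α)
    (htri : ∃ s : Finset V, G.IsNClique 3 s)
    (h4 : ∀ S : Finset V, S.card = 4 → inducedEdgeCount G S ≤ 4) :
    3 * α - 3 ≤ Fintype.card V := by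
  classical
  obtain ⟨s, hs⟩ := htri
  obtain ⟨a, b, c, hab', hac', hbc', rfl⟩ := Finset.card_eq_three.1 hs.card_eq
  have hab : G.Adj a b := hs.1 (by simp) (by simp) hab'
  have hac : G.Adj a c := hs.1 (by simp) (by simp) hac'
  have hbc : G.Adj b c := hs.1 (by simp) (by simp) hbc'
  set A := G.neighborFinset a
  set B := G.neighborFinset b
  set C := G.neighborFinset c
  have hA : A.card = α := hreg a
  have hB : B.card = α := hreg b
  have hC : C.card = α := hreg c
  have hABc : A ∩ B ⊆ {c} := by
    intro v hv
    simp only [A, B, Finset.mem_inter, mem_neighborFinset] at hv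
    simp [key_aux G h4 hab hac hbc hv.1.symm hv.2.symm]
  have hACb : A ∩ C ⊆ {b} := by
    intro v hv
    simp only [A, C, Finset.mem_inter, mem_neighborFinset] at hv
    simp [key_aux G h4 hac hab hbc.symm hv.1.symm hv.2.symm]
  have hBCa : B ∩ C ⊆ {a} := by
    intro v hv
    simp only [B, C, Finset.mem_inter, mem_neighborFinset] at hv
    simp [key_aux G h4 hbc hab.symm hac.symm hv.1.symm hv.2.symm]
  have h1 : (A ∪ B).card + (A ∩ B).card = A.card + B.card :=
    Finset.card_union_add_card_inter A B
  have h2 : ((A ∪ B) ∪ C).card + ((A ∪ B) ∩ C).card = (A ∪ B).card + C.card :=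
    Finset.card_union_add_card_inter (A ∪ B) C
  have hi1 : (A ∩ B).card ≤ 1 := le_trans (Finset.card_le_card hABc) (by simp)
  have hi2 : ((A ∪ B) ∩ C).card ≤ 2 := by
    have : (A ∪ B) ∩ C ⊆ {b} ∪ {a} := by
      rw [Finset.union_inter_distrib_right]
      exact Finset.union_subset_union hACb hBCa
    exact le_trans (Finset.card_le_card this) (le_trans (Finset.card_union_le _ _) (by simp))
  have hle : ((A ∪ B) ∪ C).card ≤ Fintype.card V := Finset.card_le_univ _
  omega
end

section
/- Let G be a regular finite simple graph, let k ≥ 3 be an integer and let x be an integer with 0 ≤ x ≤ (k−1)(k−2)/2. Suppose that every set of k vertices of G induces at most k(k−1)/2 − x − 1 edges. Define y as follows: y = k(k−1)/2 − 1 if x = (k−1)(k−2)/2; y = ⌊2x/(k−1)⌋ + x + 1 if k is odd and x ≤ (k−1)(k−2)/2 − 1; y = 2⌊x/(k−1)⌋ + x + 1 if k is even, x ≤ (k−1)(k−2)/2 − 1 and 0 ≤ x mod (k−1) ≤ (k−4)/2; and y = 2⌊x/(k−1)⌋ + x + 2 if k is even, x ≤ (k−1)(k−2)/2 − 1 and (k−2)/2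 ≤ x mod (k−1) ≤ k−2. Then every set of k+1 vertices of G induces at most (k+1)k/2 − y − 1 edges. -/
open SimpleGraph

private lemma final_step (c a b x y B M : ℕ)
    (key : c * a ≤ b * (B - x - 1))
    (h1 : a * y < b * (x + 1))
    (h2 : x + 1 ≤ B)
    (h3 : b * B = a * M) : c ≤ M - y - 1 := by
  have hyM : a * y < a * M := by
    calc a * y < b * (x + 1) := h1
      _ ≤ b * B := Nat.mul_le_mul_left _ h2
      _ = a * M := h3
  have hyM' : y < M := Nat.lt_of_mul_lt_mul_left hyM
  obtain ⟨z, hz⟩ : ∃ z, M = y + z + 1 := ⟨M - y - 1, by omega⟩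
  obtain ⟨w, hw⟩ : ∃ w, B = x + 1 + w := ⟨B - (x + 1), by omega⟩
  subst hz hw
  have hw' : x + 1 + w - x - 1 = w := by omega
  rw [hw'] at key
  have h3' : b * (x + 1) + b * w = a * y + a * z + a := by
    calc b * (x + 1) + b * w = b * (x + 1 + w) := by ring
      _ = a * (y + z + 1) := h3
      _ = a * y + a * z + a := by ring
  have hbw : b * w < a * (z + 1) := by nlinarith [h1, h3']
  have hca : a * c < a * (z + 1) := by
    calc a * c = c * a := Nat.mul_comm _ _
      _ ≤ b * w := key
      _ < a * (z + 1) := hbw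
  have := Nat.lt_of_mul_lt_mul_left hca
  omega

theorem stmt14 {V : Type*} [Fintype V] (G : SimpleGraph V) [DecidableRel G.Adj]
    (α k x y : ℕ) (hreg : G.IsRegularOfDegree α) (hk : 3 ≤ k)
    (hx : x ≤ (k - 1) * (k - 2) / 2)
    (hG : ∀ S : Finset V, S.card = k → inducedEdgeCount G S ≤ k * (k - 1) / 2 - x - 1)
    (hy : y = if x = (k - 1) * (k - 2) / 2 then k * (k - 1) / 2 - 1
          else if Odd k then 2 * x / (k - 1) + x + 1
          else if x % (k - 1) ≤ (k - 4) / 2 then 2 * (x / (k - 1)) + x + 1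
          else 2 * (x / (k - 1)) + x + 2) :
    ∀ S : Finset V, S.card = k + 1 → inducedEdgeCount G S ≤ (k + 1) * k / 2 - y - 1 := by
  classical
  intro S hS
  have hcount : ∀ T : Finset V,
      inducedEdgeCount G T = (G.edgeFinset.filter (fun e => ∀ v ∈ e, v ∈ T)).card := by
    intro T
    rw [inducedEdgeCount, ← Set.ncard_coe_finset]
    congr 1
    ext e
    simp [SimpleGraph.mem_edgeFinset]
  have hstep : ∀ v, G.edgeFinset.filter (fun e => ∀ w ∈ e, w ∈ S.erase v)
      = (G.edgeFinset.filter (fun e => ∀ w ∈ e, w ∈ S)).filter (fun e => v ∉ e) := by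
    intro v
    ext e
    simp only [Finset.mem_filter, Finset.mem_erase]
    constructor
    · rintro ⟨he, h⟩
      exact ⟨⟨he, fun w hw => (h w hw).2⟩, fun hv => (h v hv).1 rfl⟩
    · rintro ⟨⟨he, h⟩, hv⟩
      exact ⟨he, fun w hw => ⟨fun hwv => hv (hwv ▸ hw), h w hw⟩⟩
  have hendpoint : ∀ e ∈ G.edgeFinset.filter (fun e => ∀ w ∈ e, w ∈ S),
      (S.filter (fun v => v ∉ e)).card = k - 1 := by
    intro e he
    simp only [Finset.mem_filter, SimpleGraph.mem_edgeFinset] at he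
    obtain ⟨he1, he2⟩ := he
    revert he1 he2
    induction e using Sym2.ind with
    | _ a b =>
      intro he1 he2
      have hadj : G.Adj a b := he1
      have hab : a ≠ b := hadj.ne
      have ha : a ∈ S := he2 a (Sym2.mem_mk_left a b)
      have hb : b ∈ S := he2 b (Sym2.mem_mk_right a b)
      have h2 : (S.filter (fun v => v ∈ (s(a, b) : Sym2 V))).card = 2 := by
        have heq : S.filter (fun v => v ∈ (s(a, b) : Sym2 V)) = {a, b} := by
          ext v
          simp only [Finset.mem_filter, Sym2.mem_iff, Finset.mem_insert, Finset.mem_singleton]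
          constructor
          · rintro ⟨_, h⟩; exact h
          · rintro (rfl | rfl)
            exacts [⟨ha, Or.inl rfl⟩, ⟨hb, Or.inr rfl⟩]
        rw [heq, Finset.card_insert_of_notMem (by simp [hab]), Finset.card_singleton]
      have hsplit := Finset.card_filter_add_card_filter_not
        (s := S) (p := fun v => v ∈ (s(a, b) : Sym2 V))
      omega
  have hdouble : ∑ v ∈ S, inducedEdgeCount G (S.erase v) = inducedEdgeCount G S * (k - 1) := by
    calc ∑ v ∈ S, inducedEdgeCount G (S.erase v)
        = ∑ v ∈ S, ((G.edgeFinset.filter (fun e => ∀ w ∈ e, w ∈ S)).filter (fun e => v ∉ e)).card := by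
          refine Finset.sum_congr rfl fun v _ => ?_
          rw [hcount, hstep]
      _ = ∑ v ∈ S, ∑ e ∈ G.edgeFinset.filter (fun e => ∀ w ∈ e, w ∈ S), (if v ∉ e then 1 else 0) := by
          refine Finset.sum_congr rfl fun v _ => ?_
          rw [Finset.card_filter]
      _ = ∑ e ∈ G.edgeFinset.filter (fun e => ∀ w ∈ e, w ∈ S), ∑ v ∈ S, (if v ∉ e then 1 else 0) :=
          Finset.sum_comm
      _ = ∑ e ∈ G.edgeFinset.filter (fun e => ∀ w ∈ e, w ∈ S), (S.filter (fun v => v ∉ e)).card := by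
          refine Finset.sum_congr rfl fun e _ => ?_
          rw [Finset.card_filter]
      _ = ∑ e ∈ G.edgeFinset.filter (fun e => ∀ w ∈ e, w ∈ S), (k - 1) :=
          Finset.sum_congr rfl hendpoint
      _ = inducedEdgeCount G S * (k - 1) := by
          rw [Finset.sum_const, hcount, smul_eq_mul]
  have key : inducedEdgeCount G S * (k - 1) ≤ (k + 1) * (k * (k - 1) / 2 - x - 1) := by
    rw [← hdouble]
    calc ∑ v ∈ S, inducedEdgeCount G (S.erase v)
        ≤ ∑ _v ∈ S, (k * (k - 1) / 2 - x - 1) := by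
          refine Finset.sum_le_sum fun v hv => hG _ ?_
          simp [Finset.card_erase_of_mem hv, hS]
      _ = (k + 1) * (k * (k - 1) / 2 - x - 1) := by
          rw [Finset.sum_const, hS, smul_eq_mul]
  clear hdouble hstep hendpoint hcount hG hreg hS
  obtain ⟨i, hi⟩ : ∃ i, k = 2 * i + 3 ∨ k = 2 * i + 4 := ⟨(k - 3) / 2, by omega⟩
  rcases hi with rfl | rfl
  · -- k odd
    rw [show 2 * i + 3 - 1 = 2 * i + 2 from by omega] at hy hx key
    rw [show 2 * i + 3 - 2 = 2 * i + 1 from by omega] at hy hx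
    rw [show 2 * i + 3 + 1 = 2 * i + 4 from by omega] at key ⊢
    rw [show (2 * i + 3) * (2 * i + 2) / 2 = (2 * i + 3) * (i + 1) from by
          rw [show (2 * i + 3) * (2 * i + 2) = ((2 * i + 3) * (i + 1)) * 2 from by ring,
              Nat.mul_div_cancel _ two_pos]] at hy key
    rw [show (2 * i + 2) * (2 * i + 1) / 2 = (i + 1) * (2 * i + 1) from by
          rw [show (2 * i + 2) * (2 * i + 1) = ((i + 1) * (2 * i + 1)) * 2 from by ring,
              Nat.mul_div_cancel _ two_pos]] at hy hx
    rw [show (2 * i + 4) * (2 * i + 3) / 2 = (i + 2) * (2 * i + 3) from by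
          rw [show (2 * i + 4) * (2 * i + 3) = ((i + 2) * (2 * i + 3)) * 2 from by ring,
              Nat.mul_div_cancel _ two_pos]]
    refine final_step _ (2 * i + 2) (2 * i + 4) x y ((2 * i + 3) * (i + 1))
      ((i + 2) * (2 * i + 3)) key ?_ (by nlinarith [hx]) (by ring)
    by_cases hxe : x = (i + 1) * (2 * i + 1)
    · rw [if_pos hxe] at hy
      have hpos : 0 < (2 * i + 3) * (i + 1) := by positivity
      have hy1 : y + 1 = (2 * i + 3) * (i + 1) := by rw [hy, Nat.sub_add_cancel hpos]
      subst hxe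
      nlinarith [hy1]
    · have hodd : Odd (2 * i + 3) := by
        rw [Nat.odd_iff]; omega
      rw [if_neg hxe, if_pos hodd,
          show 2 * x / (2 * i + 2) = x / (i + 1) from by
            rw [show 2 * i + 2 = 2 * (i + 1) from by ring, Nat.mul_div_mul_left x (i + 1) two_pos]] at hy
      obtain ⟨q, hq⟩ : ∃ q, x / (i + 1) = q := ⟨_, rfl⟩
      obtain ⟨r, hr0⟩ : ∃ r, x % (i + 1) = r := ⟨_, rfl⟩
      have hmod := Nat.div_add_mod x (i + 1)
      have hlt' : x % (i + 1) < i + 1 := Nat.mod_lt _ (by omega)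
      rw [hq] at hmod
      rw [hr0] at hmod hlt'
      rw [hq] at hy
      subst hy
      nlinarith [hmod, hlt']
  · -- k even
    rw [show 2 * i + 4 - 1 = 2 * i + 3 from by omega] at hy hx key
    rw [show 2 * i + 4 - 2 = 2 * i + 2 from by omega] at hy hx
    rw [show 2 * i + 4 - 4 = 2 * i from by omega] at hy
    rw [show 2 * i + 4 + 1 = 2 * i + 5 from by omega] at key ⊢
    rw [show (2 * i + 4) * (2 * i + 3) / 2 = (i + 2) * (2 * i + 3) from by
          rw [show (2 * i + 4) * (2 * i + 3) = ((i + 2) * (2 * i + 3)) * 2 from by ring,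
              Nat.mul_div_cancel _ two_pos]] at hy key
    rw [show (2 * i + 3) * (2 * i + 2) / 2 = (2 * i + 3) * (i + 1) from by
          rw [show (2 * i + 3) * (2 * i + 2) = ((2 * i + 3) * (i + 1)) * 2 from by ring,
              Nat.mul_div_cancel _ two_pos]] at hy hx
    rw [show (2 * i + 5) * (2 * i + 4) / 2 = (2 * i + 5) * (i + 2) from by
          rw [show (2 * i + 5) * (2 * i + 4) = ((2 * i + 5) * (i + 2)) * 2 from by ring,
              Nat.mul_div_cancel _ two_pos]]
    refine final_step _ (2 * i + 3) (2 * i + 5) x y ((i + 2) * (2 * i + 3))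
      ((2 * i + 5) * (i + 2)) key ?_ (by nlinarith [hx]) (by ring)
    by_cases hxe : x = (2 * i + 3) * (i + 1)
    · rw [if_pos hxe] at hy
      have hpos : 0 < (i + 2) * (2 * i + 3) := by positivity
      have hy1 : y + 1 = (i + 2) * (2 * i + 3) := by rw [hy, Nat.sub_add_cancel hpos]
      subst hxe
      nlinarith [hy1]
    · have hodd : ¬ Odd (2 * i + 4) := by
        rw [Nat.odd_iff]; omega
      rw [if_neg hxe, if_neg hodd, show 2 * i / 2 = i from by omega] at hy
      obtain ⟨q, hq⟩ : ∃ q, x / (2 * i + 3) = q := ⟨_, rfl⟩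
      obtain ⟨r, hr0⟩ : ∃ r, x % (2 * i + 3) = r := ⟨_, rfl⟩
      have hmod := Nat.div_add_mod x (2 * i + 3)
      have hlt' : x % (2 * i + 3) < 2 * i + 3 := Nat.mod_lt _ (by omega)
      rw [hq] at hmod
      rw [hr0] at hmod hlt'
      rw [hq, hr0] at hy
      by_cases hr : r ≤ i
      · rw [if_pos hr] at hy
        subst hy
        nlinarith [hmod, hlt']
      · rw [if_neg hr] at hy
        have hr' : i + 1 ≤ r := by omega
        subst hy
        nlinarith [hmod, hlt', hr']
end

section
/- Let ρ ≥ 2 and α ≥ 2 be integers and let (P, 𝒢, ℬ) be a transversal design TD(ρ, α): P is a set of ρ·α points, 𝒢 is a partition of P into ρ groups each of size α, ℬ is a collection of distinct ρ-element subsets of P (blocks) such that every block meets every group in exactly one point and every pair of points from two different groups is contained in exactly one block. Let k be an integer with 1 ≤ k ≤ α, and write k = b·ρ + t with b, t nonnegative integers and t ≤ ρ − 1. Then for every k-element subset S of P, the number of blocks of ℬ that intersect S is at least k·α − k(k−1)/2 + ρ·b(b−1)/2 + b·t. -/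
open Finset

private lemma ptwise15 (b n : ℕ) : (2*b+1)*n ≤ n*n + (b*b+b) := by
  rcases le_total n b with h | h
  · nlinarith
  · obtain ⟨d, rfl⟩ := Nat.exists_eq_add_of_le h
    have hd : d ≤ d * d := Nat.le_mul_self d
    nlinarith

private lemma choose2_15 (m : ℕ) : m * m = 2 * Nat.choose m 2 + m := by
  induction m with
  | zero => simp
  | succ n ih =>
    have h2 : (n+1).choose 2 = n.choose 1 + n.choose 2 := Nat.choose_succ_succ n 1
    rw [h2, Nat.choose_one_right]
    have h : (n+1)*(n+1) = n*n + 2*n + 1 := by ring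
    omega

private lemma bonf15 {γ β : Type*} [DecidableEq γ] [DecidableEq β]
    (s : Finset γ) (f : γ → Finset β) :
    2 * ∑ i ∈ s, (f i).card ≤
      2 * (s.biUnion f).card + ∑ p ∈ s.offDiag, ((f p.1) ∩ (f p.2)).card := by
  induction s using Finset.induction_on with
  | empty => simp
  | @insert a s ha ih =>
    rw [Finset.sum_insert ha, Finset.biUnion_insert, Finset.offDiag_insert (has := ha)]
    have hd1 : Disjoint (s.offDiag ∪ {a} ×ˢ s) (s ×ˢ {a}) := by
      rw [Finset.disjoint_left]
      rintro ⟨x, y⟩ hx hy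
      simp only [Finset.mem_union, Finset.mem_offDiag, Finset.mem_product,
        Finset.mem_singleton] at hx hy
      rcases hx with h | h
      · exact ha (hy.2 ▸ h.2.1)
      · exact ha (h.1 ▸ hy.1)
    have hd2 : Disjoint (s.offDiag) ({a} ×ˢ s) := by
      rw [Finset.disjoint_left]
      rintro ⟨x, y⟩ hx hy
      simp only [Finset.mem_offDiag, Finset.mem_product, Finset.mem_singleton] at hx hy
      exact ha (hy.1 ▸ hx.1)
    rw [Finset.sum_union hd1, Finset.sum_union hd2]
    have e1 : ∑ p ∈ {a} ×ˢ s, ((f p.1) ∩ (f p.2)).card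
        = ∑ i ∈ s, ((f a) ∩ (f i)).card := by
      rw [Finset.sum_product, Finset.sum_singleton]
    have e2 : ∑ p ∈ s ×ˢ {a}, ((f p.1) ∩ (f p.2)).card
        = ∑ i ∈ s, ((f a) ∩ (f i)).card := by
      rw [Finset.sum_product]
      simp [Finset.inter_comm]
    rw [e1, e2]
    have hcut : ((f a) ∩ s.biUnion f).card ≤ ∑ i ∈ s, ((f a) ∩ (f i)).card := by
      have heq : (f a) ∩ s.biUnion f = s.biUnion (fun i => (f a) ∩ (f i)) := by
        ext x
        simp only [Finset.mem_inter, Finset.mem_biUnion]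
        tauto
      rw [heq]
      exact Finset.card_biUnion_le
    have hun : ((f a) ∪ s.biUnion f).card + ((f a) ∩ s.biUnion f).card
        = (f a).card + (s.biUnion f).card := Finset.card_union_add_card_inter _ _
    omega

theorem stmt15 {P : Type*} [Fintype P] [DecidableEq P]
    (ρ α : ℕ) (hρ : 2 ≤ ρ) (hα : 2 ≤ α)
    (Grp : Finset (Finset P)) (Blk : Finset (Finset P))
    (hP : Fintype.card P = ρ * α)
    (hGcard : Grp.card = ρ)
    (hGsize : ∀ g ∈ Grp, g.card = α)
    (hGpart : ∀ p : P, ∃! g, g ∈ Grp ∧ p ∈ g)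
    (hBsize : ∀ bl ∈ Blk, bl.card = ρ)
    (hBmeet : ∀ bl ∈ Blk, ∀ g ∈ Grp, (bl ∩ g).card = 1)
    (hpair : ∀ p q : P, p ≠ q → (∀ g ∈ Grp, ¬(p ∈ g ∧ q ∈ g)) →
      ∃! bl, bl ∈ Blk ∧ p ∈ bl ∧ q ∈ bl)
    (k b t : ℕ) (hk1 : 1 ≤ k) (hk : k ≤ α) (hkbt : k = b * ρ + t) (ht : t ≤ ρ - 1) :
    ∀ S : Finset P, S.card = k →
      k * α - Nat.choose k 2 + ρ * Nat.choose b 2 + b * t ≤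
        (Blk.filter (fun bl => (bl ∩ S).Nonempty)).card := by
  intro S hS
  classical
  -- the group of each point
  choose gr hgr using hGpart
  have hgrG : ∀ p, gr p ∈ Grp := fun p => (hgr p).1.1
  have hgrmem : ∀ p, p ∈ gr p := fun p => (hgr p).1.2
  have hgruniq : ∀ p, ∀ g ∈ Grp, p ∈ g → g = gr p := fun p g hg hpg => (hgr p).2 g ⟨hg, hpg⟩
  -- blocks through a point
  set B : P → Finset (Finset P) := fun p => Blk.filter (fun bl => p ∈ bl) with hBdef
  -- the set of blocks meeting S is the union of the B p, p ∈ S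
  have hfilter : Blk.filter (fun bl => (bl ∩ S).Nonempty) = S.biUnion B := by
    ext bl
    simp only [Finset.mem_filter, Finset.mem_biUnion, Finset.Nonempty, Finset.mem_inter,
      hBdef]
    tauto
  -- each point lies in exactly α blocks
  have hreg : ∀ p : P, (B p).card = α := by
    intro p
    obtain ⟨g', hg'G, hg'ne⟩ := Finset.exists_mem_ne
      (by omega : 1 < Grp.card) (gr p)
    have hpg' : p ∉ g' := fun hp => hg'ne (hgruniq p g' hg'G hp)
    have hBU : B p = g'.biUnion (fun q => Blk.filter (fun bl => p ∈ bl ∧ q ∈ bl)) := by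
      ext bl
      simp only [hBdef, Finset.mem_filter, Finset.mem_biUnion]
      constructor
      · rintro ⟨hbl, hpbl⟩
        have h1 : (bl ∩ g').card = 1 := hBmeet bl hbl g' hg'G
        obtain ⟨q, hq⟩ := Finset.card_eq_one.mp h1
        have hqmem : q ∈ bl ∩ g' := by rw [hq]; exact Finset.mem_singleton_self q
        exact ⟨q, (Finset.mem_inter.mp hqmem).2, hbl, hpbl, (Finset.mem_inter.mp hqmem).1⟩
      · rintro ⟨q, _, hbl, hpbl, _⟩
        exact ⟨hbl, hpbl⟩
    rw [hBU, Finset.card_biUnion, ← hGsize g' hg'G]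
    · rw [Finset.card_eq_sum_ones]
      apply Finset.sum_congr rfl
      intro q hq
      have hpq : p ≠ q := fun h => hpg' (h ▸ hq)
      have hnog : ∀ g ∈ Grp, ¬(p ∈ g ∧ q ∈ g) := by
        rintro g hgG ⟨hpg, hqg⟩
        have h1 : g = gr p := hgruniq p g hgG hpg
        have h2 : g = gr q := hgruniq q g hgG hqg
        have h3 : g' = gr q := hgruniq q g' hg'G hq
        exact hg'ne (h3 ▸ h2 ▸ h1 ▸ rfl : g' = gr p)
      obtain ⟨bl0, hbl0, hbl0u⟩ := hpair p q hpq hnog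
      rw [Finset.card_eq_one]
      refine ⟨bl0, ?_⟩
      ext bl
      simp only [Finset.mem_filter, Finset.mem_singleton]
      constructor
      · rintro ⟨h1, h2, h3⟩; exact hbl0u bl ⟨h1, h2, h3⟩
      · rintro rfl; exact ⟨hbl0.1, hbl0.2⟩
    · intro q1 h1 q2 h2 hne
      rw [Function.onFun, Finset.disjoint_left]
      intro bl hb1 hb2
      simp only [Finset.mem_filter] at hb1 hb2
      have hlt : 1 < (bl ∩ g').card :=
        Finset.one_lt_card.mpr ⟨q1, Finset.mem_inter.mpr ⟨hb1.2.2, h1⟩,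
          q2, Finset.mem_inter.mpr ⟨hb2.2.2, h2⟩, hne⟩
      have := hBmeet bl hb1.1 g' hg'G
      omega
  -- intersections of B p and B q
  have hsame : ∀ p q : P, p ≠ q → gr p = gr q → (B p ∩ B q).card = 0 := by
    intro p q hne hgreq
    rw [Finset.card_eq_zero, Finset.eq_empty_iff_forall_notMem]
    intro bl hbl
    simp only [hBdef, Finset.mem_inter, Finset.mem_filter] at hbl
    have hlt : 1 < (bl ∩ gr p).card :=
      Finset.one_lt_card.mpr ⟨p, Finset.mem_inter.mpr ⟨hbl.1.2, hgrmem p⟩,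
        q, Finset.mem_inter.mpr ⟨hbl.2.2, hgreq ▸ hgrmem q⟩, hne⟩
    have := hBmeet bl hbl.1.1 (gr p) (hgrG p)
    omega
  have hdiff : ∀ p q : P, p ≠ q → gr p ≠ gr q → (B p ∩ B q).card = 1 := by
    intro p q hne hgrne
    have hnog : ∀ g ∈ Grp, ¬(p ∈ g ∧ q ∈ g) := by
      rintro g hgG ⟨hpg, hqg⟩
      exact hgrne ((hgruniq p g hgG hpg) ▸ (hgruniq q g hgG hqg))
    obtain ⟨bl0, hbl0, hbl0u⟩ := hpair p q hne hnog
    rw [Finset.card_eq_one]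
    refine ⟨bl0, ?_⟩
    ext bl
    simp only [hBdef, Finset.mem_inter, Finset.mem_filter, Finset.mem_singleton]
    constructor
    · rintro ⟨⟨h1, h2⟩, _, h3⟩; exact hbl0u bl ⟨h1, h2, h3⟩
    · rintro rfl; exact ⟨⟨hbl0.1, hbl0.2.1⟩, hbl0.1, hbl0.2.2⟩
  -- fiber sizes
  set n : Finset P → ℕ := fun g => (S.filter (fun p => gr p = g)).card with hndef
  have hsum_n : ∑ g ∈ Grp, n g = k := by
    rw [← hS]
    exact (Finset.card_eq_sum_card_fiberwise (fun p _ => hgrG p)).symm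
  set S2 : ℕ := ∑ g ∈ Grp, n g * n g with hS2def
  set ps : ℕ := ∑ p ∈ S.offDiag, ((B p.1) ∩ (B p.2)).card with hpsdef
  set M : ℕ := (Blk.filter (fun bl => (bl ∩ S).Nonempty)).card with hMdef
  -- Bonferroni
  have h1 : 2 * (k * α) ≤ 2 * M + ps := by
    have hb := bonf15 S B
    have hsum : ∑ p ∈ S, (B p).card = k * α := by
      rw [Finset.sum_congr rfl (fun p _ => hreg p), Finset.sum_const, hS, smul_eq_mul]
    rw [hsum] at hb
    rw [hMdef, hfilter]
    exact hb
  -- pair sum identity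
  have hps : ps + S2 = k * k := by
    have hsplit := Finset.sum_filter_add_sum_filter_not S.offDiag
      (fun pq => gr pq.1 = gr pq.2) (fun pq => ((B pq.1) ∩ (B pq.2)).card)
    have hz : ∑ pq ∈ S.offDiag.filter (fun pq => gr pq.1 = gr pq.2),
        ((B pq.1) ∩ (B pq.2)).card = 0 := by
      apply Finset.sum_eq_zero
      intro pq hpq
      simp only [Finset.mem_filter, Finset.mem_offDiag] at hpq
      exact hsame pq.1 pq.2 hpq.1.2.2 hpq.2
    have ho : ∑ pq ∈ S.offDiag.filter (fun pq => ¬ gr pq.1 = gr pq.2),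
        ((B pq.1) ∩ (B pq.2)).card
        = (S.offDiag.filter (fun pq => ¬ gr pq.1 = gr pq.2)).card := by
      rw [Finset.card_eq_sum_ones]
      apply Finset.sum_congr rfl
      intro pq hpq
      simp only [Finset.mem_filter, Finset.mem_offDiag] at hpq
      exact hdiff pq.1 pq.2 hpq.1.2.2 hpq.2
    have hpred : (S.offDiag.filter (fun pq => gr pq.1 = gr pq.2)).card + k = S2 := by
      have hfib : (S.offDiag.filter (fun pq => gr pq.1 = gr pq.2)).card
          = ∑ g ∈ Grp, ((S.offDiag.filter (fun pq => gr pq.1 = gr pq.2)).filter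
              (fun pq => gr pq.1 = g)).card :=
        Finset.card_eq_sum_card_fiberwise (fun pq hpq => hgrG pq.1)
      have hfib2 : ∀ g ∈ Grp,
          ((S.offDiag.filter (fun pq => gr pq.1 = gr pq.2)).filter
              (fun pq => gr pq.1 = g))
          = (S.filter (fun p => gr p = g)).offDiag := by
        intro g _
        ext pq
        simp only [Finset.mem_filter, Finset.mem_offDiag]
        constructor
        · rintro ⟨⟨⟨h1, h2, h3⟩, h4⟩, h5⟩
          exact ⟨⟨h1, h5⟩, ⟨h2, h4 ▸ h5⟩, h3⟩
        · rintro ⟨⟨h1, h5⟩, ⟨h2, h6⟩, h3⟩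
          exact ⟨⟨⟨h1, h2, h3⟩, h5.trans h6.symm⟩, h5⟩
      rw [hfib, Finset.sum_congr rfl (fun g hg => by rw [hfib2 g hg, Finset.offDiag_card]),
        hS2def, ← hsum_n, ← Finset.sum_add_distrib]
      apply Finset.sum_congr rfl
      intro g _
      have : n g ≤ n g * n g := Nat.le_mul_self _
      simp only [hndef] at this ⊢
      omega
    have hoff : S.offDiag.card + k = k * k := by
      rw [Finset.offDiag_card, hS]
      have : k ≤ k * k := Nat.le_mul_self k
      omega
    have hcards : (S.offDiag.filter (fun pq => gr pq.1 = gr pq.2)).card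
        + (S.offDiag.filter (fun pq => ¬ gr pq.1 = gr pq.2)).card = S.offDiag.card :=
      Finset.card_filter_add_card_filter_not _
    rw [hpsdef, ← hsplit, hz, ho]
    omega
  -- convexity bound
  have h3 : (2*b+1) * k ≤ S2 + ρ * (b*b + b) := by
    calc (2*b+1) * k = ∑ g ∈ Grp, (2*b+1) * n g := by rw [← Finset.mul_sum, hsum_n]
      _ ≤ ∑ g ∈ Grp, (n g * n g + (b*b + b)) :=
          Finset.sum_le_sum (fun g _ => ptwise15 b (n g))
      _ = S2 + ρ * (b*b + b) := by
          rw [Finset.sum_add_distrib, Finset.sum_const, hGcard, smul_eq_mul]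
  -- arithmetic wrap-up
  have hkk : k * k = 2 * Nat.choose k 2 + k := choose2_15 k
  have hbb : b * b = 2 * Nat.choose b 2 + b := choose2_15 b
  have hrb : ρ * (b * b) = 2 * (ρ * Nat.choose b 2) + ρ * b := by rw [hbb]; ring
  have hbk : b * k = ρ * (b * b) + b * t := by rw [hkbt]; ring
  have h7 : k * k ≤ k * α := Nat.mul_le_mul_left k hk
  have hC : Nat.choose k 2 ≤ k * α := by nlinarith [hkk, h7]
  zify [hC]
  have h1' := h1
  have hps' := hps
  have h3' := h3
  zify at h1' hps' h3' hrb hbk hkk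
  linarith
end

section
/- Let ρ ≥ 2, α ≥ 2, n ≥ 3 and θ be integers, and let N₁, …, N_n be α-element subsets of a θ-element set of symbols such that every symbol belongs to exactly ρ of the sets N_i and |N_i ∩ N_j| ≤ 1 for all i ≠ j. If n < ρ(ρ−1)α − ρ(ρ−2), then there exist three distinct indices i, j, l and three distinct symbols c₁, c₂, c₃ such that c₁ ∈ N_i ∩ N_l, c₂ ∈ N_i ∩ N_j and c₃ ∈ N_j ∩ N_l (a triangle in the incidence matrix); in particular |N_i ∪ N_j ∪ N_l| ≤ 3α − 3. -/
theorem stmt17 (n θ α ρ : ℕ) (hρ : 2 ≤ ρ) (hα : 2 ≤ α) (hn : 3 ≤ n)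
    (N : Fin n → Finset (Fin θ))
    (hcard : ∀ i, (N i).card = α)
    (hrep : ∀ c : Fin θ, (Finset.univ.filter (fun i => c ∈ N i)).card = ρ)
    (hint : ∀ i j : Fin n, i ≠ j → (N i ∩ N j).card ≤ 1)
    (hsmall : n < ρ * (ρ - 1) * α - ρ * (ρ - 2)) :
    ∃ i j l : Fin n, i ≠ j ∧ j ≠ l ∧ i ≠ l ∧
      (∃ c₁ c₂ c₃ : Fin θ, c₁ ≠ c₂ ∧ c₂ ≠ c₃ ∧ c₁ ≠ c₃ ∧
        c₁ ∈ N i ∩ N l ∧ c₂ ∈ N i ∩ N j ∧ c₃ ∈ N j ∩ N l) ∧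
      (N i ∪ N j ∪ N l).card ≤ 3 * α - 3 := by
  -- Helper: two distinct symbols cannot both lie in two distinct nodes.
  have pair : ∀ i j : Fin n, ∀ a b : Fin θ, i ≠ j → a ≠ b → a ∈ N i → a ∈ N j →
      b ∈ N i → b ∈ N j → False := by
    intro i j a b hij hab hai haj hbi hbj
    have hsub : ({a, b} : Finset (Fin θ)) ⊆ N i ∩ N j := by
      intro x hx
      simp only [Finset.mem_insert, Finset.mem_singleton] at hx
      rcases hx with rfl | rfl <;> simp [Finset.mem_inter, hai, haj, hbi, hbj]
    have h2 := Finset.card_le_card hsub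
    rw [Finset.card_pair hab] at h2
    have h1 := hint i j hij
    omega
  -- Step 1: existence of a triangle
  have exT : ∃ i j l : Fin n, i ≠ j ∧ j ≠ l ∧ i ≠ l ∧
      ∃ c₁ c₂ c₃ : Fin θ, c₁ ≠ c₂ ∧ c₂ ≠ c₃ ∧ c₁ ≠ c₃ ∧
        c₁ ∈ N i ∩ N l ∧ c₂ ∈ N i ∩ N j ∧ c₃ ∈ N j ∩ N l := by
    by_contra hno
    obtain ⟨c, hc⟩ : (N (⟨0, by omega⟩ : Fin n)).Nonempty :=
      Finset.card_pos.mp (by rw [hcard]; omega)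
    set S := Finset.univ.filter (fun i => c ∈ N i) with hSdef
    have hS : S.card = ρ := hrep c
    have hmemS : ∀ j, j ∈ S ↔ c ∈ N j := by intro j; simp [hSdef]
    set E : Fin θ → Finset (Fin n) :=
      fun a => Finset.univ.filter (fun j => j ∉ S ∧ a ∈ N j) with hEdef
    have hmemE : ∀ a j, j ∈ E a ↔ j ∉ S ∧ a ∈ N j := by intro a j; simp [hEdef]
    have hEcard : ∀ k ∈ S, ∀ a ∈ N k \ {c}, (E a).card = ρ - 1 := by
      intro k hk a ha
      simp only [Finset.mem_sdiff, Finset.mem_singleton] at ha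
      have hck : c ∈ N k := (hmemS k).mp hk
      have heq : E a = (Finset.univ.filter (fun j => a ∈ N j)).erase k := by
        ext j
        simp only [hmemE, Finset.mem_erase, Finset.mem_filter, Finset.mem_univ, true_and]
        constructor
        · rintro ⟨hjS, haj⟩
          exact ⟨fun h => hjS (h ▸ hk), haj⟩
        · rintro ⟨hjk, haj⟩
          refine ⟨fun hjS => ?_, haj⟩
          exact pair k j a c (Ne.symm hjk) ha.2 ha.1 haj hck ((hmemS j).mp hjS)
      rw [heq, Finset.card_erase_of_mem (by simp [ha.1]), hrep a]
    set D : Fin n → Finset (Fin n) := fun k => (N k \ {c}).biUnion E with hDdef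
    have hDcard : ∀ k ∈ S, (D k).card = (α - 1) * (ρ - 1) := by
      intro k hk
      have hdisj : ∀ a ∈ N k \ {c}, ∀ b ∈ N k \ {c}, a ≠ b → Disjoint (E a) (E b) := by
        intro a ha b hb hab
        rw [Finset.disjoint_left]
        intro j hja hjb
        rw [hmemE] at hja hjb
        simp only [Finset.mem_sdiff, Finset.mem_singleton] at ha hb
        have hkj : k ≠ j := fun h => hja.1 (h ▸ hk)
        exact pair k j a b hkj hab ha.1 hja.2 hb.1 hjb.2
      rw [hDdef]
      rw [Finset.card_biUnion hdisj]
      rw [Finset.sum_congr rfl (fun a ha => hEcard k hk a ha), Finset.sum_const,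
        smul_eq_mul]
      have hcsub : {c} ⊆ N k := Finset.singleton_subset_iff.mpr ((hmemS k).mp hk)
      rw [Finset.card_sdiff_of_subset hcsub, Finset.card_singleton, hcard k]
    have hDdisj : ∀ k ∈ S, ∀ m ∈ S, k ≠ m → Disjoint (D k) (D m) := by
      intro k hk m hm hkm
      rw [Finset.disjoint_left]
      intro j hjk hjm
      rw [hDdef] at hjk hjm
      simp only [Finset.mem_biUnion] at hjk hjm
      obtain ⟨a, ha, hja⟩ := hjk
      obtain ⟨b, hb, hjb⟩ := hjm
      rw [hmemE] at hja hjb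
      simp only [Finset.mem_sdiff, Finset.mem_singleton] at ha hb
      have hck : c ∈ N k := (hmemS k).mp hk
      have hcm : c ∈ N m := (hmemS m).mp hm
      have hkj : k ≠ j := fun h => hja.1 (h ▸ hk)
      have hjm' : j ≠ m := fun h => hja.1 (h ▸ hm)
      by_cases hab : a = b
      · subst hab
        exact pair k m c a hkm (Ne.symm ha.2) hck hcm ha.1 hb.1
      · exact hno ⟨k, j, m, hkj, hjm', hkm, c, a, b, Ne.symm ha.2, hab, Ne.symm hb.2,
          Finset.mem_inter.mpr ⟨hck, hcm⟩, Finset.mem_inter.mpr ⟨ha.1, hja.2⟩,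
          Finset.mem_inter.mpr ⟨hjb.2, hb.1⟩⟩
    have hSdisj : Disjoint S (S.biUnion D) := by
      rw [Finset.disjoint_left]
      intro k hk hk'
      simp only [Finset.mem_biUnion] at hk'
      obtain ⟨m, hm, hkm⟩ := hk'
      rw [hDdef] at hkm
      simp only [Finset.mem_biUnion] at hkm
      obtain ⟨a, ha, hka⟩ := hkm
      exact ((hmemE a k).mp hka).1 hk
    have h1 : (S ∪ S.biUnion D).card ≤ n := by
      have := Finset.card_le_univ (S ∪ S.biUnion D)
      simpa using this
    rw [Finset.card_union_of_disjoint hSdisj, hS, Finset.card_biUnion hDdisj,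
      Finset.sum_congr rfl hDcard, Finset.sum_const, hS, smul_eq_mul] at h1
    -- h1 : ρ + ρ * ((α - 1) * (ρ - 1)) ≤ n
    obtain ⟨r, rfl⟩ : ∃ r, ρ = r + 2 := ⟨ρ - 2, by omega⟩
    obtain ⟨a, rfl⟩ : ∃ a, α = a + 2 := ⟨α - 2, by omega⟩
    simp only [show r + 2 - 1 = r + 1 from rfl, show r + 2 - 2 = r from rfl,
      show a + 2 - 1 = a + 1 from rfl] at h1 hsmall
    have key : (r + 2) * (r + 1) * (a + 2) =
        (r + 2) * r + ((r + 2) + (r + 2) * ((a + 1) * (r + 1))) := by ring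
    rw [key, Nat.add_sub_cancel_left] at hsmall
    exact absurd (lt_of_lt_of_le hsmall h1) (lt_irrefl n)
  -- Step 2: the union bound follows from the triangle
  obtain ⟨i, j, l, hij, hjl, hil, c₁, c₂, c₃, h12, h23, h13, h1, h2, h3⟩ := exT
  refine ⟨i, j, l, hij, hjl, hil, ⟨c₁, c₂, c₃, h12, h23, h13, h1, h2, h3⟩, ?_⟩
  rw [Finset.mem_inter] at h1 h2 h3
  have e1 := Finset.card_union_add_card_inter (N i) (N j)
  have e2 := Finset.card_union_add_card_inter (N i ∪ N j) (N l)
  have hAB : 1 ≤ (N i ∩ N j).card :=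
    Finset.card_pos.mpr ⟨c₂, Finset.mem_inter.mpr ⟨h2.1, h2.2⟩⟩
  have hUC : 2 ≤ ((N i ∪ N j) ∩ N l).card := by
    have hsub : ({c₁, c₃} : Finset (Fin θ)) ⊆ (N i ∪ N j) ∩ N l := by
      intro x hx
      simp only [Finset.mem_insert, Finset.mem_singleton] at hx
      rcases hx with rfl | rfl
      · exact Finset.mem_inter.mpr ⟨Finset.mem_union_left _ h1.1, h1.2⟩
      · exact Finset.mem_inter.mpr ⟨Finset.mem_union_right _ h3.1, h3.2⟩
    have := Finset.card_le_card hsub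
    rwa [Finset.card_pair h13] at this
  have hi := hcard i
  have hj := hcard j
  have hl := hcard l
  omega
end

section
/- Let n, θ, α, M, k be positive integers with k ≤ n and α + 1 ≤ M ≤ θ + 1, and let N₁, …, N_n be α-element subsets of a θ-element set such that for every k-element set I of indices, |⋃_{i∈I} N_i| ≥ M. Then n · C(θ−α, M−1−α) ≤ (k−1) · C(θ, M−1), where C(a,b) denotes the binomial coefficient; equivalently, k ≥ ⌈n · C(M−1, α) / C(θ, α)⌉ + 1. -/
open Finset

-- number of m-subsets of univ containing a fixed set A
lemma count_supersets {β : Type*} [Fintype β] [DecidableEq β] (A : Finset β) (m : ℕ)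
    (hAm : A.card ≤ m) :
    ((Finset.univ.powersetCard m).filter (fun S => A ⊆ S)).card
      = (Fintype.card β - A.card).choose (m - A.card) := by
  have : ((Finset.univ.powersetCard m).filter (fun S => A ⊆ S)).card
      = (Aᶜ.powersetCard (m - A.card)).card := by
    apply Finset.card_nbij' (fun S => S \ A) (fun T => T ∪ A)
    · intro S hS
      simp only [mem_coe, mem_filter, mem_powersetCard] at hS
      rw [mem_coe, mem_powersetCard]
      refine ⟨fun x hx => ?_, ?_⟩
      · simp only [mem_sdiff] at hx; simpa using hx.2
      · rw [card_sdiff_of_subset hS.2, hS.1.2]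
    · intro T hT
      rw [mem_coe, mem_powersetCard] at hT
      simp only [mem_coe, mem_filter, mem_powersetCard]
      have hdisj : Disjoint T A := by
        refine Finset.disjoint_left.2 fun x hx hxA => ?_
        have := hT.1 hx; simp at this; exact this hxA
      refine ⟨⟨subset_univ _, ?_⟩, subset_union_right⟩
      rw [card_union_of_disjoint hdisj, hT.2]
      omega
    · intro S hS
      simp only [mem_coe, mem_filter, mem_powersetCard] at hS
      exact Finset.sdiff_union_of_subset hS.2
    · intro T hT
      simp only [mem_coe, mem_powersetCard] at hT
      have hdisj : Disjoint T A := by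
        refine Finset.disjoint_left.2 fun x hx hxA => ?_
        have := hT.1 hx; simp at this; exact this hxA
      dsimp only
      rw [Finset.union_sdiff_right, Finset.sdiff_eq_self_of_disjoint hdisj]
  rw [this, card_powersetCard, card_compl]

theorem stmt18 (n θ α M k : ℕ) (hn : 0 < n) (hθ : 0 < θ) (hα : 0 < α) (hM : 0 < M)
    (hk0 : 0 < k) (hkn : k ≤ n) (hαM : α + 1 ≤ M) (hMθ : M ≤ θ + 1)
    (N : Fin n → Finset (Fin θ)) (hcard : ∀ i, (N i).card = α)
    (hrec : ∀ I : Finset (Fin n), I.card = k → M ≤ (I.biUnion N).card) :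
    n * Nat.choose (θ - α) (M - 1 - α) ≤ (k - 1) * Nat.choose θ (M - 1) ∧
    ⌈((n * Nat.choose (M - 1) α : ℕ) : ℚ) / ((Nat.choose θ α : ℕ) : ℚ)⌉ + 1 ≤ (k : ℤ) := by
  set P : Finset (Finset (Fin θ)) := Finset.univ.powersetCard (M - 1) with hP
  -- per-S bound
  have hbound : ∀ S ∈ P, (Finset.univ.filter (fun i => N i ⊆ S)).card ≤ k - 1 := by
    intro S hS
    by_contra h
    push_neg at h
    have hk' : k ≤ (Finset.univ.filter (fun i => N i ⊆ S)).card := by omega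
    obtain ⟨I, hIsub, hIcard⟩ := Finset.exists_subset_card_eq hk'
    have hun : I.biUnion N ⊆ S := by
      intro x hx
      rw [Finset.mem_biUnion] at hx
      obtain ⟨i, hi, hxi⟩ := hx
      have := hIsub hi
      rw [Finset.mem_filter] at this
      exact this.2 hxi
    have h1 := hrec I hIcard
    have h2 := Finset.card_le_card hun
    rw [hP, Finset.mem_powersetCard] at hS
    omega
  -- double counting
  have hdc : ∑ S ∈ P, (Finset.univ.filter (fun i => N i ⊆ S)).card
      = ∑ i : Fin n, (P.filter (fun S => N i ⊆ S)).card := by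
    simp_rw [Finset.card_filter]
    rw [Finset.sum_comm]
  have hcount : ∀ i : Fin n, (P.filter (fun S => N i ⊆ S)).card
      = (θ - α).choose (M - 1 - α) := by
    intro i
    rw [hP, count_supersets (N i) (M - 1) (by rw [hcard i]; omega), hcard i,
      Fintype.card_fin]
  have key : n * Nat.choose (θ - α) (M - 1 - α) ≤ (k - 1) * Nat.choose θ (M - 1) := by
    calc n * Nat.choose (θ - α) (M - 1 - α)
        = ∑ i : Fin n, (P.filter (fun S => N i ⊆ S)).card := by
          simp [hcount, Finset.card_univ]
      _ = ∑ S ∈ P, (Finset.univ.filter (fun i => N i ⊆ S)).card := hdc.symm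
      _ ≤ ∑ S ∈ P, (k - 1) := Finset.sum_le_sum hbound
      _ = (k - 1) * Nat.choose θ (M - 1) := by
          rw [Finset.sum_const, smul_eq_mul, hP, Finset.card_powersetCard,
            Finset.card_univ, Fintype.card_fin, mul_comm]
  refine ⟨key, ?_⟩
  -- second part
  have hαθ : α ≤ θ := by omega
  have hchoosepos : 0 < Nat.choose θ α := Nat.choose_pos hαθ
  have hpos2 : 0 < (θ - α).choose (M - 1 - α) := Nat.choose_pos (by omega)
  have hid : θ.choose (M - 1) * (M - 1).choose α
      = θ.choose α * (θ - α).choose (M - 1 - α) :=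
    Nat.choose_mul (by omega)
  have hnat : n * Nat.choose (M - 1) α ≤ (k - 1) * Nat.choose θ α := by
    have h2 : n * Nat.choose (M - 1) α * ((θ - α).choose (M - 1 - α))
        ≤ (k - 1) * Nat.choose θ α * ((θ - α).choose (M - 1 - α)) := by
      calc n * Nat.choose (M - 1) α * ((θ - α).choose (M - 1 - α))
          = n * ((θ - α).choose (M - 1 - α)) * Nat.choose (M - 1) α := by ring
        _ ≤ (k - 1) * Nat.choose θ (M - 1) * Nat.choose (M - 1) α :=
            Nat.mul_le_mul_right _ key
        _ = (k - 1) * (θ.choose (M - 1) * (M - 1).choose α) := by ring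
        _ = (k - 1) * Nat.choose θ α * ((θ - α).choose (M - 1 - α)) := by
            rw [hid]; ring
    exact Nat.le_of_mul_le_mul_right h2 hpos2
  obtain ⟨k', rfl⟩ : ∃ k', k = k' + 1 := ⟨k - 1, by omega⟩
  have hq : ((n * Nat.choose (M - 1) α : ℕ) : ℚ) / ((Nat.choose θ α : ℕ) : ℚ)
      ≤ ((k' : ℤ) : ℚ) := by
    rw [div_le_iff₀ (by exact_mod_cast hchoosepos)]
    have : (n * Nat.choose (M - 1) α : ℚ) ≤ (k' : ℚ) * Nat.choose θ α := by
      exact_mod_cast hnat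
    push_cast
    linarith
  have := Int.ceil_le.2 hq
  omega
end

section
/- Let n ≥ 4 be an even integer, set α = n − 2 and θ = n(n−2)/2. Then: (i) for every (n−2)-regular finite simple graph G on n vertices (equivalently, the complete graph K_n with a perfect matching removed), the minimum over all (n−2)-element vertex sets S of the number of edges of G incident to at least one vertex of S equals θ − 1; and (ii) ⌈n · C(θ−2, α) / C(θ, α)⌉ + 1 = n − 2, where C(a,b) is the binomial coefficient and ⌈·⌉ the ceiling of a rational number. Hence the fractional repetition code based on G stores a file of size M = θ − 1 with reconstruction degree k = n − 2 and attains the lower bound k ≥ ⌈n · C(M−1, α)/C(θ, α)⌉ + 1 on the reconstruction degree. -/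
open SimpleGraph

set_option maxHeartbeats 1600000 in
theorem stmt19 (n : ℕ) (hn : 4 ≤ n) (hne : Even n) :
    (∀ (V : Type) [Fintype V] (G : SimpleGraph V) [DecidableRel G.Adj],
        Fintype.card V = n → G.IsRegularOfDegree (n - 2) →
        fileSize G (n - 2) = n * (n - 2) / 2 - 1) ∧
    ⌈((n * Nat.choose (n * (n - 2) / 2 - 2) (n - 2) : ℕ) : ℚ) /
        ((Nat.choose (n * (n - 2) / 2) (n - 2) : ℕ) : ℚ)⌉ + 1 = (n : ℤ) - 2 := by
  constructor
  · intro V _ G _ hcard hreg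
    classical
    -- edge count
    have hsum : ∑ v, G.degree v = n * (n - 2) := by
      rw [Finset.sum_congr rfl (fun v _ => hreg v), Finset.sum_const, smul_eq_mul,
        Finset.card_univ, hcard]
    have hE2 : 2 * G.edgeFinset.card = n * (n - 2) := by
      rw [← G.sum_degrees_eq_twice_card_edges]; exact hsum
    have hθ : G.edgeFinset.card = n * (n - 2) / 2 := by omega
    have hinc : ∀ S : Finset V, incidentEdgeCount G S
        = (G.edgeFinset.filter (fun e => ∃ v ∈ S, v ∈ e)).card := by
      intro S
      rw [incidentEdgeCount, ← Set.ncard_coe_finset]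
      congr 1
      ext e
      simp [Set.mem_setOf_eq, mem_edgeFinset]
    -- lower bound
    have hbound : ∀ S : Finset V, S.card = n - 2 →
        n * (n - 2) / 2 - 1 ≤ incidentEdgeCount G S := by
      intro S hS
      have hcompl : Sᶜ.card = 2 := by
        rw [Finset.card_compl, hS, hcard]; omega
      obtain ⟨a, b, hab, hSc⟩ := Finset.card_eq_two.mp hcompl
      have hsub : (G.edgeFinset.filter (fun e => ¬ ∃ v ∈ S, v ∈ e)) ⊆ {s(a, b)} := by
        intro e he
        simp only [Finset.mem_filter, mem_edgeFinset] at he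
        obtain ⟨heE, hno⟩ := he
        induction e with
        | h x y =>
          push_neg at hno
          have hx : x ∉ S := fun hx => hno x hx (Sym2.mem_mk_left x y)
          have hy : y ∉ S := fun hy => hno y hy (Sym2.mem_mk_right x y)
          have hx2 : x ∈ Sᶜ := Finset.mem_compl.mpr hx
          have hy2 : y ∈ Sᶜ := Finset.mem_compl.mpr hy
          rw [hSc, Finset.mem_insert, Finset.mem_singleton] at hx2 hy2
          have hxy : x ≠ y := (G.mem_edgeSet.mp heE).ne
          simp only [Finset.mem_singleton, Sym2.eq_iff]
          rcases hx2 with rfl | rfl <;> rcases hy2 with rfl | rfl <;> tauto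
      have h1 : (G.edgeFinset.filter (fun e => ¬ ∃ v ∈ S, v ∈ e)).card ≤ 1 := by
        simpa using Finset.card_le_card hsub
      have hsplit := Finset.card_filter_add_card_filter_not
        (s := G.edgeFinset) (p := fun e => ∃ v ∈ S, v ∈ e)
      rw [hinc S]
      omega
    -- existence of optimal S
    have hVne : Nonempty V := by
      rw [← Fintype.card_pos_iff, hcard]; omega
    obtain ⟨a⟩ := hVne
    have hdeg : 0 < G.degree a := by rw [hreg a]; omega
    obtain ⟨b, hab⟩ : ∃ b, G.Adj a b := by
      obtain ⟨b, hb⟩ := Finset.card_pos.mp hdeg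
      exact ⟨b, (G.mem_neighborFinset a b).mp hb⟩
    set S : Finset V := Finset.univ \ {a, b} with hSdef
    have hScard : S.card = n - 2 := by
      rw [Finset.card_sdiff_of_subset (Finset.subset_univ _), Finset.card_univ, hcard,
        Finset.card_pair hab.ne]
    have hSfilter : (G.edgeFinset.filter (fun e => ¬ ∃ v ∈ S, v ∈ e)) = {s(a, b)} := by
      apply Finset.Subset.antisymm
      · intro e he
        simp only [Finset.mem_filter, mem_edgeFinset] at he
        obtain ⟨heE, hno⟩ := he
        induction e with
        | h x y =>
          push_neg at hno
          have hx : x ∉ S := fun hx => hno x hx (Sym2.mem_mk_left x y)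
          have hy : y ∉ S := fun hy => hno y hy (Sym2.mem_mk_right x y)
          simp only [hSdef, Finset.mem_sdiff, Finset.mem_univ, true_and, not_not,
            Finset.mem_insert, Finset.mem_singleton] at hx hy
          have hxy : x ≠ y := (G.mem_edgeSet.mp heE).ne
          simp only [Finset.mem_singleton, Sym2.eq_iff]
          rcases hx with rfl | rfl <;> rcases hy with rfl | rfl <;> tauto
      · intro e he
        rw [Finset.mem_singleton] at he
        subst he
        simp only [Finset.mem_filter, mem_edgeFinset, G.mem_edgeSet]
        refine ⟨hab, ?_⟩
        rintro ⟨v, hvS, hv⟩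
        rw [Sym2.mem_iff] at hv
        simp only [hSdef, Finset.mem_sdiff, Finset.mem_univ, true_and,
          Finset.mem_insert, Finset.mem_singleton] at hvS
        tauto
    have hval : incidentEdgeCount G S = n * (n - 2) / 2 - 1 := by
      have hsplit := Finset.card_filter_add_card_filter_not
        (s := G.edgeFinset) (p := fun e => ∃ v ∈ S, v ∈ e)
      rw [hSfilter, Finset.card_singleton] at hsplit
      rw [hinc S]
      omega
    -- conclude
    have hmem : n * (n - 2) / 2 - 1 ∈
        { m | ∃ S : Finset V, S.card = n - 2 ∧ m = incidentEdgeCount G S } :=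
      ⟨S, hScard, hval.symm⟩
    refine le_antisymm (Nat.sInf_le hmem) (le_csInf ⟨_, hmem⟩ ?_)
    rintro m ⟨T, hT, rfl⟩
    exact hbound T hT
  · -- arithmetic part
    obtain ⟨r, hr⟩ := hne
    set k : ℕ := r - 2 with hk
    have hnk : n = 2 * k + 4 := by omega
    subst hnk
    have e2 : 2 * k + 4 - 2 = 2 * k + 2 := by omega
    have e3 : (2 * k + 4) * (2 * k + 4 - 2) / 2 = 2 * k ^ 2 + 6 * k + 4 := by
      rw [e2]
      have : (2 * k + 4) * (2 * k + 2) = 2 * (2 * k ^ 2 + 6 * k + 4) := by ring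
      rw [this, Nat.mul_div_cancel_left _ (by norm_num)]
    have e1 : (2 * k + 4) * (2 * k + 4 - 2) / 2 - 2 = 2 * k ^ 2 + 6 * k + 2 := by
      rw [e3]
      generalize k ^ 2 = t
      omega
    rw [e1, e3, e2]
    -- choose identity
    have h1 := Nat.choose_mul_succ_eq (2 * k ^ 2 + 6 * k + 3) (2 * k + 2)
    have h2 := Nat.choose_mul_succ_eq (2 * k ^ 2 + 6 * k + 2) (2 * k + 2)
    have s1 : 2 * k ^ 2 + 6 * k + 3 + 1 = 2 * k ^ 2 + 6 * k + 4 := by ring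
    have s2 : 2 * k ^ 2 + 6 * k + 2 + 1 = 2 * k ^ 2 + 6 * k + 3 := by ring
    have s3 : 2 * k ^ 2 + 6 * k + 3 + 1 - (2 * k + 2) = 2 * k ^ 2 + 4 * k + 2 := by omega
    have s4 : 2 * k ^ 2 + 6 * k + 2 + 1 - (2 * k + 2) = 2 * k ^ 2 + 4 * k + 1 := by omega
    rw [s3] at h1
    rw [s4] at h2
    rw [s1] at h1
    rw [s2] at h2
    set A := Nat.choose (2 * k ^ 2 + 6 * k + 2) (2 * k + 2) with hA
    set B := Nat.choose (2 * k ^ 2 + 6 * k + 4) (2 * k + 2) with hB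
    set C1 := Nat.choose (2 * k ^ 2 + 6 * k + 3) (2 * k + 2) with hC1
    have key : A * ((2 * k ^ 2 + 6 * k + 3) * (2 * k ^ 2 + 6 * k + 4))
        = B * ((2 * k ^ 2 + 4 * k + 2) * (2 * k ^ 2 + 4 * k + 1)) := by
      calc A * ((2 * k ^ 2 + 6 * k + 3) * (2 * k ^ 2 + 6 * k + 4))
          = (A * (2 * k ^ 2 + 6 * k + 3)) * (2 * k ^ 2 + 6 * k + 4) := by ring
        _ = (C1 * (2 * k ^ 2 + 4 * k + 1)) * (2 * k ^ 2 + 6 * k + 4) := by rw [h2]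
        _ = (C1 * (2 * k ^ 2 + 6 * k + 4)) * (2 * k ^ 2 + 4 * k + 1) := by ring
        _ = (B * (2 * k ^ 2 + 4 * k + 2)) * (2 * k ^ 2 + 4 * k + 1) := by rw [h1]
        _ = B * ((2 * k ^ 2 + 4 * k + 2) * (2 * k ^ 2 + 4 * k + 1)) := by ring
    have hBpos : 0 < B := Nat.choose_pos (by nlinarith)
    have hBQ : (0 : ℚ) < (B : ℚ) := by exact_mod_cast hBpos
    have keyQ : (A : ℚ) * ((2 * (k:ℚ) ^ 2 + 6 * k + 3) * (2 * (k:ℚ) ^ 2 + 6 * k + 4))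
        = (B : ℚ) * ((2 * (k:ℚ) ^ 2 + 4 * k + 2) * (2 * (k:ℚ) ^ 2 + 4 * k + 1)) := by
      exact_mod_cast key
    have hTT : (0 : ℚ) < (2 * (k:ℚ) ^ 2 + 6 * k + 3) * (2 * (k:ℚ) ^ 2 + 6 * k + 4) := by
      positivity
    have hq : (((2 * k + 4) * A : ℕ) : ℚ) / ((B : ℕ) : ℚ)
        = ((2 * (k:ℚ) + 4) * ((2 * (k:ℚ) ^ 2 + 4 * k + 2) * (2 * (k:ℚ) ^ 2 + 4 * k + 1)))
          / ((2 * (k:ℚ) ^ 2 + 6 * k + 3) * (2 * (k:ℚ) ^ 2 + 6 * k + 4)) := by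
      rw [div_eq_div_iff hBQ.ne' hTT.ne']
      push_cast
      linear_combination (2 * (k:ℚ) + 4) * keyQ
    rw [hq]
    have hceil : ⌈((2 * (k:ℚ) + 4) * ((2 * (k:ℚ) ^ 2 + 4 * k + 2) * (2 * (k:ℚ) ^ 2 + 4 * k + 1)))
          / ((2 * (k:ℚ) ^ 2 + 6 * k + 3) * (2 * (k:ℚ) ^ 2 + 6 * k + 4))⌉ = 2 * (k:ℤ) + 1 := by
      rw [Int.ceil_eq_iff]
      constructor
      · rw [lt_div_iff₀ hTT]
        push_cast
        nlinarith [sq_nonneg (k:ℚ)]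
      · rw [div_le_iff₀ hTT]
        push_cast
        nlinarith [sq_nonneg (k:ℚ)]
    rw [hceil]
    push_cast
    ring
end
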